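/- arXiv:2407.08573 — 4 statements merged into one kernel-verified Lean document; each statement's English description precedes it below -/
import Mathlib

section
/- A morphism f : A → B in Ord is a descent morphism, or equivalently a pullback-stable regular epimorphism, if and only if for all b₀ ≤ b₁ in B there exist a₀ ≤ a₁ in A with f(a₀) = b₀ and f(a₁) = b₁. -/
open CategoryTheory Limits

universe u
universe u₁ v₁ u₂ v₂

attribute [local instance] CategoryTheory.ConcreteCategory.instFunLike

namespace Desc

/-! ### Order-theoretic notions for preorders ("ordered sets") -/

/-- `x ≅ y`: equivalence in a preorder. -/
def EquivLE {X : Type u} [Preorder X] (x y : X) : Prop := x ≤ y ∧ y ≤ x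

/-- `m` is a binary meet (greatest lower bound) of `y` and `z`. -/
def IsMeet {X : Type u} [Preorder X] (y z m : X) : Prop :=
  m ≤ y ∧ m ≤ z ∧ ∀ u, u ≤ y → u ≤ z → u ≤ m

/-- `j` is a join (least upper bound) of the subset `S` computed in the down-set `↓x`. -/
def IsLocalJoin {X : Type u} [Preorder X] (x : X) (S : Set X) (j : X) : Prop :=
  j ≤ x ∧ (∀ s ∈ S, s ≤ j) ∧ ∀ u, u ≤ x → (∀ s ∈ S, s ≤ u) → j ≤ u

/-- `X` is locally complete: every subset of a down-set `↓x` has a join in `↓x`. -/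
def LocallyComplete (X : Type u) [Preorder X] : Prop :=
  ∀ x : X, ∀ S : Set X, (∀ s ∈ S, s ≤ x) → ∃ j, IsLocalJoin x S j

/-- `X` is complete: every subset has a join (least upper bound). -/
def CompleteOrd (X : Type u) [Preorder X] : Prop :=
  ∀ S : Set X, ∃ j, IsLUB S j

/-- `X` locally has binary meets: each down-set `↓x` has binary meets
(these are automatically meets in `X` of the pair). -/
def LocallyBinaryMeets (X : Type u) [Preorder X] : Prop :=
  ∀ x y z : X, y ≤ x → z ≤ x → ∃ m, IsMeet y z m

/-- `X` is locally cartesian closed: each down-set `↓x` has binary meets and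
exponentials `z^y` satisfying `w ∧ y ≤ z ↔ w ≤ z^y`. -/
def LocallyCartesianClosed (X : Type u) [Preorder X] : Prop :=
  LocallyBinaryMeets X ∧
    ∀ x y z : X, y ≤ x → z ≤ x →
      ∃ e, e ≤ x ∧ ∀ w, w ≤ x → ((∃ m, IsMeet w y m ∧ m ≤ z) ↔ w ≤ e)

theorem LocallyComplete.meets {X : Type u} [Preorder X] (h : LocallyComplete X) :
    LocallyBinaryMeets X := by
  intro x y z hy hz
  obtain ⟨j, hj⟩ := h x {u | u ≤ y ∧ u ≤ z} (fun s hs => hs.1.trans hy)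
  exact ⟨j, hj.2.2 y hy (fun s hs => hs.1), hj.2.2 z hz (fun s hs => hs.2),
    fun u h1 h2 => hj.2.1 u ⟨h1, h2⟩⟩

theorem CompleteOrd.meets {X : Type u} [Preorder X] (h : CompleteOrd X) :
    LocallyBinaryMeets X := by
  intro _ y z _ _
  obtain ⟨j, hj⟩ := h {u | u ≤ y ∧ u ≤ z}
  exact ⟨j, hj.2 (fun u hu => hu.1), hj.2 (fun u hu => hu.2),
    fun u h1 h2 => hj.1 ⟨h1, h2⟩⟩

/-! ### Descent-theoretic notions -/

/-- A morphism `f : A ⟶ B` in a category with pullbacks is an *effective descent morphism*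
if the comparison functor from `𝒜/B` to the Eilenberg–Moore category of the monad induced on
`𝒜/A` by the adjunction `f_! ⊣ f*` is an equivalence, i.e. `f*` is monadic. -/
def IsEffectiveDescentMorphism {C : Type*} [Category C] [HasPullbacks C]
    {A B : C} (f : A ⟶ B) : Prop :=
  (Monad.comparison (Over.mapPullbackAdj f)).IsEquivalence

/-- A morphism `f : A ⟶ B` in a category with pullbacks is a *descent morphism*
if the comparison functor from `𝒜/B` to the Eilenberg–Moore category of the monad induced on
`𝒜/A` by the adjunction `f_! ⊣ f*` is fully faithful. -/
def IsDescentMorphism {C : Type*} [Category C] [HasPullbacks C]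
    {A B : C} (f : A ⟶ B) : Prop :=
  (Monad.comparison (Over.mapPullbackAdj f)).Full ∧
    (Monad.comparison (Over.mapPullbackAdj f)).Faithful

/-- A morphism `f : A ⟶ B` is a (pullback-)stable regular epimorphism if every pullback of it
(along any `g : Z ⟶ B`) is a regular epimorphism. -/
def IsStableRegularEpi {C : Type*} [Category C] [HasPullbacks C]
    {A B : C} (f : A ⟶ B) : Prop :=
  ∀ ⦃Z : C⦄ (g : Z ⟶ B), Nonempty (RegularEpi (pullback.snd f g))



section PreordPullbacks

instance : HasPullbacks Preord.{u} := by
  have key : ∀ {A B C : Preord.{u}} (f : A ⟶ C) (g : B ⟶ C), HasLimit (cospan f g) := by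
    intro A B C f g
    let P : Preord.{u} := Preord.of {p : A × B // f p.1 = g p.2}
    let fst : P ⟶ A := Preord.ofHom ⟨fun p => p.1.1, fun _ _ h => h.1⟩
    let snd : P ⟶ B := Preord.ofHom ⟨fun p => p.1.2, fun _ _ h => h.2⟩
    have eq : fst ≫ f = snd ≫ g := Preord.ext (fun p => p.2)
    refine HasLimit.mk ⟨_, PullbackCone.IsLimit.mk eq
      (fun s => Preord.ofHom ⟨fun d => ⟨(s.fst d, s.snd d),
        congrFun (congrArg (fun (h : s.pt ⟶ C) => (h : s.pt → C)) s.condition) d⟩,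
        fun _ _ h => ⟨s.fst.hom.monotone h, s.snd.hom.monotone h⟩⟩)
      (fun s => rfl) (fun s => rfl) (fun s m h1 h2 => ?_)⟩
    apply Preord.ext
    intro d
    apply Subtype.ext
    exact Prod.ext (congrFun (congrArg (fun (h : s.pt ⟶ A) => (h : s.pt → A)) h1) d)
      (congrFun (congrArg (fun (h : s.pt ⟶ B) => (h : s.pt → B)) h2) d)
  exact @hasPullbacks_of_hasLimit_cospan _ _ (fun {A B C f g} => key f g)

instance : HasPullbacks PartOrd.{u} := by
  have key : ∀ {A B C : PartOrd.{u}} (f : A ⟶ C) (g : B ⟶ C), HasLimit (cospan f g) := by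
    intro A B C f g
    let P : PartOrd.{u} := PartOrd.of {p : A × B // f p.1 = g p.2}
    let fst : P ⟶ A := PartOrd.ofHom ⟨fun p => p.1.1, fun _ _ h => h.1⟩
    let snd : P ⟶ B := PartOrd.ofHom ⟨fun p => p.1.2, fun _ _ h => h.2⟩
    have eq : fst ≫ f = snd ≫ g := PartOrd.ext (fun p => p.2)
    refine HasLimit.mk ⟨_, PullbackCone.IsLimit.mk eq
      (fun s => PartOrd.ofHom ⟨fun d => ⟨(s.fst d, s.snd d),
        congrFun (congrArg (fun (h : s.pt ⟶ C) => (h : s.pt → C)) s.condition) d⟩,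
        fun _ _ h => ⟨s.fst.hom.monotone h, s.snd.hom.monotone h⟩⟩)
      (fun s => rfl) (fun s => rfl) (fun s m h1 h2 => ?_)⟩
    apply PartOrd.ext
    intro d
    apply Subtype.ext
    exact Prod.ext (congrFun (congrArg (fun (h : s.pt ⟶ A) => (h : s.pt → A)) h1) d)
      (congrFun (congrArg (fun (h : s.pt ⟶ B) => (h : s.pt → B)) h2) d)
  exact @hasPullbacks_of_hasLimit_cospan _ _ (fun {A B C f g} => key f g)

end PreordPullbacks



variable (X : Type u) [Preorder X]

/-! ### The lax comma category `Ord // X` -/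

/-- Objects of the lax comma category `Ord // X`: an ordered set `A` together with a
monotone map `α : A → X`. -/
structure OrdComma : Type (u + 1) where
  carrier : Type u
  [str : Preorder carrier]
  map : carrier → X
  mono : Monotone map

attribute [instance] OrdComma.str

variable {X}

/-- Morphisms in `Ord // X`: monotone maps `f` with `α(a) ≤ β(f(a))`. -/
@[ext]
structure OrdCommaHom (A B : OrdComma X) : Type u where
  toFun : A.carrier → B.carrier
  mono : Monotone toFun
  le : ∀ a, A.map a ≤ B.map (toFun a)

instance : Category (OrdComma X) where
  Hom := OrdCommaHom
  id A := ⟨id, monotone_id, fun _ => le_refl _⟩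
  comp f g := ⟨OrdCommaHom.toFun g ∘ OrdCommaHom.toFun f,
    (OrdCommaHom.mono g).comp (OrdCommaHom.mono f),
    fun a => (OrdCommaHom.le f a).trans (OrdCommaHom.le g _)⟩
  id_comp _ := rfl
  comp_id _ := rfl
  assoc _ _ _ := rfl

/-- The underlying function of a morphism in `Ord // X`. -/
def OrdComma.app {A B : OrdComma X} (f : A ⟶ B) : A.carrier → B.carrier :=
  OrdCommaHom.toFun f

/-! ### The category `Fam(X)` of set-indexed families of elements of `X` -/

variable (X) in
/-- Objects of `Fam(X)`: families `(α_j)_{j ∈ J}` of elements of `X`. -/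
structure FamCat : Type (u + 1) where
  idx : Type u
  val : idx → X

/-- Morphisms in `Fam(X)`: functions `f : J → K` with `α_j ≤ β_{f(j)}`. -/
@[ext]
structure FamHom (A B : FamCat X) : Type u where
  toFun : A.idx → B.idx
  le : ∀ j, A.val j ≤ B.val (toFun j)

instance : Category (FamCat X) where
  Hom := FamHom
  id A := ⟨id, fun _ => le_refl _⟩
  comp f g := ⟨FamHom.toFun g ∘ FamHom.toFun f,
    fun a => (FamHom.le f a).trans (FamHom.le g _)⟩
  id_comp _ := rfl
  comp_id _ := rfl
  assoc _ _ _ := rfl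

/-- The underlying function of a morphism in `Fam(X)`. -/
def FamCat.app {A B : FamCat X} (f : A ⟶ B) : A.idx → B.idx :=
  FamHom.toFun f

/-! ### The category `Ord ×_Set Fam(X)` -/

variable (X) in
/-- Objects of `Ord ×_Set Fam(X)`: an ordered set `C` with an arbitrary function
`χ : C → X`. -/
structure OrdFam : Type (u + 1) where
  carrier : Type u
  [str : Preorder carrier]
  map : carrier → X

attribute [instance] OrdFam.str

/-- Morphisms in `Ord ×_Set Fam(X)`: monotone maps `f` with `χ(c) ≤ ψ(f(c))`. -/
@[ext]
structure OrdFamHom (A B : OrdFam X) : Type u where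
  toFun : A.carrier → B.carrier
  mono : Monotone toFun
  le : ∀ a, A.map a ≤ B.map (toFun a)

instance : Category (OrdFam X) where
  Hom := OrdFamHom
  id A := ⟨id, monotone_id, fun _ => le_refl _⟩
  comp f g := ⟨OrdFamHom.toFun g ∘ OrdFamHom.toFun f,
    (OrdFamHom.mono g).comp (OrdFamHom.mono f),
    fun a => (OrdFamHom.le f a).trans (OrdFamHom.le g _)⟩
  id_comp _ := rfl
  comp_id _ := rfl
  assoc _ _ _ := rfl

/-! ### Functors between these categories -/

variable (X) in
/-- The forgetful functor `Ord // X ⥤ Ord`. -/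
def ordCommaForget : OrdComma X ⥤ Preord.{u} where
  obj A := Preord.of A.carrier
  map f := Preord.ofHom ⟨OrdCommaHom.toFun f, OrdCommaHom.mono f⟩
  map_id _ := rfl
  map_comp _ _ := rfl

variable (X) in
/-- The forgetful functor `Ord // X ⥤ Fam(X)`, `(A, α) ↦ (α(a))_{a ∈ A}`. -/
def ordCommaToFam : OrdComma X ⥤ FamCat X where
  obj A := ⟨A.carrier, A.map⟩
  map f := ⟨OrdCommaHom.toFun f, OrdCommaHom.le f⟩
  map_id _ := rfl
  map_comp _ _ := rfl

variable (X) in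
/-- The projection `ρ₁ : Ord ×_Set Fam(X) ⥤ Ord`. -/
def rho₁ : OrdFam X ⥤ Preord.{u} where
  obj A := Preord.of A.carrier
  map f := Preord.ofHom ⟨OrdFamHom.toFun f, OrdFamHom.mono f⟩
  map_id _ := rfl
  map_comp _ _ := rfl

variable (X) in
/-- The projection `ρ₂ : Ord ×_Set Fam(X) ⥤ Fam(X)`. -/
def rho₂ : OrdFam X ⥤ FamCat X where
  obj A := ⟨A.carrier, A.map⟩
  map f := ⟨OrdFamHom.toFun f, OrdFamHom.le f⟩
  map_id _ := rfl
  map_comp _ _ := rfl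

/-! ### Restrictions `f_x : A_x → B_x` -/

/-- For `(A, α)` in `Ord // X` and `x ∈ X`, the ordered set `A_x = {a ∈ A : x ≤ α(a)}`. -/
def OrdComma.fiber (A : OrdComma X) (x : X) : Preord.{u} :=
  Preord.of {a : A.carrier // x ≤ A.map a}

/-- The restriction `f_x : A_x → B_x` of a morphism `f : (A, α) ⟶ (B, β)` of `Ord // X`. -/
def OrdComma.fiberMap {A B : OrdComma X} (f : A ⟶ B) (x : X) :
    A.fiber x ⟶ B.fiber x :=
  Preord.ofHom ⟨fun a => ⟨OrdCommaHom.toFun f a.1, a.2.trans (OrdCommaHom.le f a.1)⟩,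
    fun _ _ h => OrdCommaHom.mono f h⟩



variable {X : Type u} [Preorder X]

theorem OrdComma.hasPullbacks (hm : LocallyBinaryMeets X) :
    HasPullbacks (OrdComma X) := by
  have key : ∀ {A B C : OrdComma X} (f : A ⟶ C) (g : B ⟶ C), HasLimit (cospan f g) := by
    intro A B C f g
    have hmeet : ∀ p : {p : A.carrier × B.carrier //
        OrdCommaHom.toFun f p.1 = OrdCommaHom.toFun g p.2},
        ∃ m, IsMeet (A.map p.1.1) (B.map p.1.2) m := fun p =>
      hm (C.map (OrdCommaHom.toFun f p.1.1)) _ _ (OrdCommaHom.le f p.1.1)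
        (by rw [p.2]; exact OrdCommaHom.le g p.1.2)
    choose μ hμ using hmeet
    let P : OrdComma X :=
      { carrier := {p : A.carrier × B.carrier //
          OrdCommaHom.toFun f p.1 = OrdCommaHom.toFun g p.2}
        map := μ
        mono := fun p q h => by
          have hpq : p.1 ≤ q.1 := h
          exact (hμ q).2.2 _ ((hμ p).1.trans (A.mono (Prod.le_def.mp hpq).1))
            ((hμ p).2.1.trans (B.mono (Prod.le_def.mp hpq).2)) }
    let pfst : P ⟶ A := ⟨fun p => p.1.1, fun _ _ h => h.1, fun p => (hμ p).1⟩
    let psnd : P ⟶ B := ⟨fun p => p.1.2, fun _ _ h => h.2, fun p => (hμ p).2.1⟩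
    have eq : pfst ≫ f = psnd ≫ g := OrdCommaHom.ext (funext fun p => p.2)
    refine HasLimit.mk ⟨_, PullbackCone.IsLimit.mk eq
      (fun s => ⟨fun d => ⟨(OrdCommaHom.toFun s.fst d, OrdCommaHom.toFun s.snd d),
          congrFun (congrArg OrdCommaHom.toFun s.condition) d⟩,
        fun _ _ h => ⟨OrdCommaHom.mono s.fst h, OrdCommaHom.mono s.snd h⟩,
        fun d => (hμ _).2.2 _ (OrdCommaHom.le s.fst d) (OrdCommaHom.le s.snd d)⟩)
      (fun s => rfl) (fun s => rfl) (fun s m h1 h2 => ?_)⟩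
    apply OrdCommaHom.ext
    funext d
    exact Subtype.ext (Prod.ext (congrFun (congrArg OrdCommaHom.toFun h1) d)
      (congrFun (congrArg OrdCommaHom.toFun h2) d))
  exact @hasPullbacks_of_hasLimit_cospan _ _ (fun {A B C f g} => key f g)

theorem FamCat.hasPullbacks (hm : LocallyBinaryMeets X) :
    HasPullbacks (FamCat X) := by
  have key : ∀ {A B C : FamCat X} (f : A ⟶ C) (g : B ⟶ C), HasLimit (cospan f g) := by
    intro A B C f g
    have hmeet : ∀ p : {p : A.idx × B.idx // FamHom.toFun f p.1 = FamHom.toFun g p.2},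
        ∃ m, IsMeet (A.val p.1.1) (B.val p.1.2) m := fun p =>
      hm (C.val (FamHom.toFun f p.1.1)) _ _ (FamHom.le f p.1.1)
        (by rw [p.2]; exact FamHom.le g p.1.2)
    choose μ hμ using hmeet
    let P : FamCat X :=
      { idx := {p : A.idx × B.idx // FamHom.toFun f p.1 = FamHom.toFun g p.2}
        val := μ }
    let pfst : P ⟶ A := ⟨fun p => p.1.1, fun p => (hμ p).1⟩
    let psnd : P ⟶ B := ⟨fun p => p.1.2, fun p => (hμ p).2.1⟩
    have eq : pfst ≫ f = psnd ≫ g := FamHom.ext (funext fun p => p.2)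
    refine HasLimit.mk ⟨_, PullbackCone.IsLimit.mk eq
      (fun s => ⟨fun d => ⟨(FamHom.toFun s.fst d, FamHom.toFun s.snd d),
          congrFun (congrArg FamHom.toFun s.condition) d⟩,
        fun d => (hμ _).2.2 _ (FamHom.le s.fst d) (FamHom.le s.snd d)⟩)
      (fun s => rfl) (fun s => rfl) (fun s m h1 h2 => ?_)⟩
    apply FamHom.ext
    funext d
    exact Subtype.ext (Prod.ext (congrFun (congrArg FamHom.toFun h1) d)
      (congrFun (congrArg FamHom.toFun h2) d))
  exact @hasPullbacks_of_hasLimit_cospan _ _ (fun {A B C f g} => key f g)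

theorem OrdFam.hasPullbacks (hm : LocallyBinaryMeets X) :
    HasPullbacks (OrdFam X) := by
  have key : ∀ {A B C : OrdFam X} (f : A ⟶ C) (g : B ⟶ C), HasLimit (cospan f g) := by
    intro A B C f g
    have hmeet : ∀ p : {p : A.carrier × B.carrier //
        OrdFamHom.toFun f p.1 = OrdFamHom.toFun g p.2},
        ∃ m, IsMeet (A.map p.1.1) (B.map p.1.2) m := fun p =>
      hm (C.map (OrdFamHom.toFun f p.1.1)) _ _ (OrdFamHom.le f p.1.1)
        (by rw [p.2]; exact OrdFamHom.le g p.1.2)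
    choose μ hμ using hmeet
    let P : OrdFam X :=
      { carrier := {p : A.carrier × B.carrier //
          OrdFamHom.toFun f p.1 = OrdFamHom.toFun g p.2}
        map := μ }
    let pfst : P ⟶ A := ⟨fun p => p.1.1, fun _ _ h => h.1, fun p => (hμ p).1⟩
    let psnd : P ⟶ B := ⟨fun p => p.1.2, fun _ _ h => h.2, fun p => (hμ p).2.1⟩
    have eq : pfst ≫ f = psnd ≫ g := OrdFamHom.ext (funext fun p => p.2)
    refine HasLimit.mk ⟨_, PullbackCone.IsLimit.mk eq
      (fun s => ⟨fun d => ⟨(OrdFamHom.toFun s.fst d, OrdFamHom.toFun s.snd d),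
          congrFun (congrArg OrdFamHom.toFun s.condition) d⟩,
        fun _ _ h => ⟨OrdFamHom.mono s.fst h, OrdFamHom.mono s.snd h⟩,
        fun d => (hμ _).2.2 _ (OrdFamHom.le s.fst d) (OrdFamHom.le s.snd d)⟩)
      (fun s => rfl) (fun s => rfl) (fun s m h1 h2 => ?_)⟩
    apply OrdFamHom.ext
    funext d
    exact Subtype.ext (Prod.ext (congrFun (congrArg OrdFamHom.toFun h1) d)
      (congrFun (congrArg OrdFamHom.toFun h2) d))
  exact @hasPullbacks_of_hasLimit_cospan _ _ (fun {A B C f g} => key f g)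



variable (X : Type u) [Preorder X]

/-- The set of connected components of an ordered set `X`: the quotient of `X` by the
equivalence relation generated by `≤` (zigzags). -/
def ConnComp : Type u := Quot (fun a b : X => a ≤ b)

/-- The connected component of `X` corresponding to `i`, as an ordered set. -/
def Component (i : ConnComp X) : Type u :=
  {x : X // Quot.mk (fun a b : X => a ≤ b) x = i}

instance (i : ConnComp X) : Preorder (Component X i) :=
  Subtype.preorder _

/-- The comparison functor `Ord // X ⥤ ∏_{i ∈ I} Ord // X_i`, where `(X_i)_{i ∈ I}` are the
connected components of `X`: it sends `(A, α)` to the family of (co)restrictions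
`(A_i, α_i : A_i → X_i)` with `A_i = α⁻¹(X_i)`. -/
def componentFunctor : OrdComma X ⥤ (∀ i : ConnComp X, OrdComma (Component X i)) where
  obj A := fun i =>
    { carrier := {a : A.carrier // Quot.mk (fun a b : X => a ≤ b) (A.map a) = i}
      map := fun a => ⟨A.map a.1, a.2⟩
      mono := fun _ _ h => A.mono h }
  map {A B} f := fun i =>
    { toFun := fun a => ⟨OrdCommaHom.toFun f a.1,
        (Quot.sound (OrdCommaHom.le f a.1)).symm.trans a.2⟩
      mono := fun _ _ h => OrdCommaHom.mono f h
      le := fun a => OrdCommaHom.le f a.1 }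
  map_id A := by
    funext i
    apply OrdCommaHom.ext
    funext a
    rfl
  map_comp f g := by
    funext i
    apply OrdCommaHom.ext
    funext a
    rfl



/-- Evaluation of a `Preord`-morphism. -/
def ap {A B : Preord.{u}} (f : A ⟶ B) : A → B := fun a => f.hom a

theorem ap_comp {A B C : Preord.{u}} (f : A ⟶ B) (g : B ⟶ C) (a : ↥A) :
    ap (f ≫ g) a = ap g (ap f a) := rfl

theorem ap_mono {A B : Preord.{u}} (f : A ⟶ B) {a b : ↥A} (h : a ≤ b) : ap f a ≤ ap f b :=
  f.hom.monotone h

theorem hom_ext' {A B : Preord.{u}} {f g : A ⟶ B} (h : ∀ a, ap f a = ap g a) : f = g :=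
  Preord.ext h

theorem ap_congr {A B : Preord.{u}} {f g : A ⟶ B} (h : f = g) (a : ↥A) : ap f a = ap g a :=
  congrArg (fun k => ap k a) h

section PB
variable {U V W : Preord.{u}} (f : U ⟶ W) (g : V ⟶ W)

/-- Build a point of an (abstract) pullback in `Preord`. -/
noncomputable def pbMk (x : ↥U) (y : ↥V) (h : ap f x = ap g y) : ↥(pullback f g) :=
  ap (pullback.lift (Preord.ofHom ⟨fun _ => x, monotone_const⟩ : Preord.of PUnit.{u+1} ⟶ U)
      (Preord.ofHom ⟨fun _ => y, monotone_const⟩ : Preord.of PUnit.{u+1} ⟶ V)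
      (hom_ext' fun _ => h)) PUnit.unit

theorem pbMk_fst (x : ↥U) (y : ↥V) (h : ap f x = ap g y) :
    ap (pullback.fst f g) (pbMk f g x y h) = x := by
  unfold pbMk
  rw [← ap_comp, pullback.lift_fst]
  rfl

theorem pbMk_snd (x : ↥U) (y : ↥V) (h : ap f x = ap g y) :
    ap (pullback.snd f g) (pbMk f g x y h) = y := by
  unfold pbMk
  rw [← ap_comp, pullback.lift_snd]
  rfl

theorem pb_ext {p q : ↥(pullback f g)}
    (h1 : ap (pullback.fst f g) p = ap (pullback.fst f g) q)
    (h2 : ap (pullback.snd f g) p = ap (pullback.snd f g) q) : p = q := by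
  let P1 : Preord.of PUnit.{u+1} ⟶ pullback f g := Preord.ofHom ⟨fun _ => p, monotone_const⟩
  let P2 : Preord.of PUnit.{u+1} ⟶ pullback f g := Preord.ofHom ⟨fun _ => q, monotone_const⟩
  have : P1 = P2 := pullback.hom_ext (hom_ext' fun _ => h1) (hom_ext' fun _ => h2)
  exact ap_congr this PUnit.unit

theorem pb_cond (p : ↥(pullback f g)) :
    ap f (ap (pullback.fst f g) p) = ap g (ap (pullback.snd f g) p) := by
  rw [← ap_comp, ← ap_comp, pullback.condition]

/-- the two-element chain -/
noncomputable def C2 : Preord.{u} := Preord.of (ULift.{u} Bool)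

noncomputable def bfalse : ↥C2.{u} := ULift.up false
noncomputable def btrue : ↥C2.{u} := ULift.up true

theorem ble : bfalse.{u} ≤ btrue.{u} := by
  show (false : Bool) ≤ true
  decide

/-- the monotone map out of `C2` given by two comparable elements -/
noncomputable def chainHom {U : Preord.{u}} (x₀ x₁ : ↥U) (h : x₀ ≤ x₁) : C2.{u} ⟶ U :=
  Preord.ofHom ⟨fun b => bif b.down then x₁ else x₀, by
    intro a b hab
    match a, b with
    | ⟨false⟩, ⟨false⟩ => exact le_refl _
    | ⟨false⟩, ⟨true⟩ => exact h
    | ⟨true⟩, ⟨true⟩ => exact le_refl _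
    | ⟨true⟩, ⟨false⟩ => exact absurd (show (true : Bool) ≤ false from hab) (by decide)⟩

theorem chainHom_f {U : Preord.{u}} (x₀ x₁ : ↥U) (h : x₀ ≤ x₁) :
    ap (chainHom x₀ x₁ h) bfalse = x₀ := rfl

theorem chainHom_t {U : Preord.{u}} (x₀ x₁ : ↥U) (h : x₀ ≤ x₁) :
    ap (chainHom x₀ x₁ h) btrue = x₁ := rfl

theorem pb_le {p q : ↥(pullback f g)}
    (h1 : ap (pullback.fst f g) p ≤ ap (pullback.fst f g) q)
    (h2 : ap (pullback.snd f g) p ≤ ap (pullback.snd f g) q) : p ≤ q := by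
  have w : chainHom _ _ h1 ≫ f = chainHom _ _ h2 ≫ g := hom_ext' fun b => by
    match b with
    | ⟨false⟩ => exact pb_cond f g p
    | ⟨true⟩ => exact pb_cond f g q
  let l := pullback.lift _ _ w
  have hp : ap l bfalse = p :=
    pb_ext f g (by rw [← ap_comp, pullback.lift_fst]; rfl)
      (by rw [← ap_comp, pullback.lift_snd]; rfl)
  have hq : ap l btrue = q :=
    pb_ext f g (by rw [← ap_comp, pullback.lift_fst]; rfl)
      (by rw [← ap_comp, pullback.lift_snd]; rfl)
  rw [← hp, ← hq]
  exact ap_mono l ble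

end PB

section RegEpi

/-- A monotone surjection along which every inequality lifts is a regular epi in `Preord`. -/
noncomputable def regularEpiOfLift {P Z : Preord.{u}} (h : P ⟶ Z)
    (hl : ∀ z₀ z₁ : ↥Z, z₀ ≤ z₁ → ∃ p₀ p₁ : ↥P, p₀ ≤ p₁ ∧ ap h p₀ = z₀ ∧ ap h p₁ = z₁) :
    RegularEpi h := by
  have hsurj : ∀ z : ↥Z, ∃ p, ap h p = z := fun z => by
    obtain ⟨p₀, _, _, e, _⟩ := hl z z le_rfl
    exact ⟨p₀, e⟩
  choose σ hσ using hsurj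
  have key : ∀ {Cpt : Preord.{u}} (t : P ⟶ Cpt),
      pullback.fst h h ≫ t = pullback.snd h h ≫ t →
      ∀ p p' : ↥P, ap h p = ap h p' → ap t p = ap t p' := by
    intro Cpt t ht p p' e
    have := ap_congr ht (pbMk h h p p' e)
    rw [ap_comp, ap_comp, pbMk_fst, pbMk_snd] at this
    exact this
  exact
  { W := pullback h h
    left := pullback.fst h h
    right := pullback.snd h h
    w := pullback.condition
    isColimit := Cofork.IsColimit.mk _
      (fun s => Preord.ofHom ⟨fun z => ap s.π (σ z), fun z₀ z₁ hz => by
        show ap s.π (σ z₀) ≤ ap s.π (σ z₁)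
        obtain ⟨p₀, p₁, hp, e₀, e₁⟩ := hl z₀ z₁ hz
        have h0 : ap s.π (σ z₀) = ap s.π p₀ :=
          key s.π s.condition _ _ (by rw [hσ, e₀])
        have h1 : ap s.π (σ z₁) = ap s.π p₁ :=
          key s.π s.condition _ _ (by rw [hσ, e₁])
        rw [h0, h1]
        exact ap_mono s.π hp⟩)
      (fun s => hom_ext' fun p => by
        show ap s.π (σ (ap h p)) = ap s.π p
        exact key s.π s.condition _ _ (hσ _))
      (fun s m hm => hom_ext' fun z => by
        have := ap_congr hm (σ z)
        rw [ap_comp] at this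
        simp only [Cofork.π_ofπ] at this
        rw [hσ] at this
        show ap m z = ap s.π (σ z)
        rw [← this]) }

theorem surj_of_regularEpi {P Z : Preord.{u}} (h : P ⟶ Z) (r : RegularEpi h) :
    ∀ z : ↥Z, ∃ p, ap h p = z := by
  haveI := RegularEpi.epi h r
  let Z' : Preord.{u} := Preord.of {z : ↥Z // ∃ p, ap h p = z}
  let π' : P ⟶ Z' := Preord.ofHom ⟨fun p => ⟨ap h p, p, rfl⟩, fun a b hab => ap_mono h hab⟩
  have hco : r.left ≫ π' = r.right ≫ π' := hom_ext' fun w => Subtype.ext (by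
    have := ap_congr r.w w
    rw [ap_comp, ap_comp] at this
    exact this)
  let k := r.isColimit.desc (Cofork.ofπ π' hco)
  have hk : h ≫ k = π' := by
    have := Cofork.IsColimit.π_desc (s := Cofork.ofπ h r.w) r.isColimit
      (t := Cofork.ofπ π' hco)
    simpa using this
  let ι : Z' ⟶ Z := Preord.ofHom ⟨Subtype.val, fun a b hab => hab⟩
  have hcomp : h ≫ (k ≫ ι) = h ≫ 𝟙 Z := by
    rw [← Category.assoc, hk, Category.comp_id]
    rfl
  have he : k ≫ ι = 𝟙 Z := (cancel_epi h).mp hcomp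
  intro z
  obtain ⟨p, hp⟩ := (ap k z).2
  refine ⟨p, ?_⟩
  have h2 := ap_congr he z
  rw [ap_comp] at h2
  exact hp.trans h2

theorem liftcond_to_stable {A B : Preord.{u}} (f : A ⟶ B)
    (hl : ∀ b₀ b₁ : ↥B, b₀ ≤ b₁ → ∃ a₀ a₁ : ↥A, a₀ ≤ a₁ ∧ ap f a₀ = b₀ ∧ ap f a₁ = b₁) :
    IsStableRegularEpi f := by
  intro Z g
  refine ⟨regularEpiOfLift _ ?_⟩
  intro z₀ z₁ hz
  obtain ⟨a₀, a₁, ha, e₀, e₁⟩ := hl (ap g z₀) (ap g z₁) (ap_mono g hz)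
  refine ⟨pbMk f g a₀ z₀ e₀, pbMk f g a₁ z₁ e₁, ?_,
    pbMk_snd f g a₀ z₀ e₀, pbMk_snd f g a₁ z₁ e₁⟩
  exact pb_le f g (by rw [pbMk_fst, pbMk_fst]; exact ha)
    (by rw [pbMk_snd, pbMk_snd]; exact hz)

theorem stable_to_lift {A B : Preord.{u}} (f : A ⟶ B) (hs : IsStableRegularEpi f) :
    ∀ b₀ b₁ : ↥B, b₀ ≤ b₁ → ∃ a₀ a₁ : ↥A, a₀ ≤ a₁ ∧ ap f a₀ = b₀ ∧ ap f a₁ = b₁ := by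
  intro b₀ b₁ hb
  set g : C2.{u} ⟶ B := chainHom b₀ b₁ hb with hg
  obtain ⟨r⟩ := hs g
  have hsurj := surj_of_regularEpi _ r
  set L : Prop := ∃ p₀ p₁ : ↥(pullback f g), p₀ ≤ p₁ ∧
    ap (pullback.snd f g) p₀ = bfalse ∧ ap (pullback.snd f g) p₁ = btrue with hL
  let PP : Preord.{u} := Preord.of (ULift.{u} Prop)
  let ψ : pullback f g ⟶ PP :=
    Preord.ofHom ⟨fun p => ULift.up ((ap (pullback.snd f g) p).down = true → L), by
      intro p q hpq
      show ((ap (pullback.snd f g) p).down = true → L) →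
        ((ap (pullback.snd f g) q).down = true → L)
      intro himp hq
      have hle : ap (pullback.snd f g) p ≤ ap (pullback.snd f g) q :=
        ap_mono _ hpq
      by_cases hp : (ap (pullback.snd f g) p).down = true
      · exact himp hp
      · have hpf : (ap (pullback.snd f g) p).down = false := by
          revert hp; cases (ap (pullback.snd f g) p).down <;> simp
        exact ⟨p, q, hpq, ULift.ext _ _ hpf, ULift.ext _ _ hq⟩⟩
  have hco : r.left ≫ ψ = r.right ≫ ψ := hom_ext' fun w => by
    have hw := ap_congr r.w w
    rw [ap_comp, ap_comp] at hw
    show ULift.up ((ap (pullback.snd f g) (ap r.left w)).down = true → L) =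
      ULift.up ((ap (pullback.snd f g) (ap r.right w)).down = true → L)
    rw [hw]
  let k := r.isColimit.desc (Cofork.ofπ ψ hco)
  have hk : pullback.snd f g ≫ k = ψ := by
    have := Cofork.IsColimit.π_desc (s := Cofork.ofπ (pullback.snd f g) r.w) r.isColimit
      (t := Cofork.ofπ ψ hco)
    simpa using this
  obtain ⟨p₀, e₀⟩ := hsurj bfalse
  obtain ⟨p₁, e₁⟩ := hsurj btrue
  have hk0 : ap k bfalse = ULift.up ((bfalse.down : Bool) = true → L) := by
    rw [← e₀]
    have := ap_congr hk p₀
    rw [ap_comp] at this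
    rw [this]
    show ULift.up ((ap (pullback.snd f g) p₀).down = true → L) = _
    rw [e₀]
  have hk1 : ap k btrue = ULift.up ((btrue.down : Bool) = true → L) := by
    rw [← e₁]
    have := ap_congr hk p₁
    rw [ap_comp] at this
    rw [this]
    show ULift.up ((ap (pullback.snd f g) p₁).down = true → L) = _
    rw [e₁]
  have hmono := ap_mono k ble
  rw [hk0, hk1] at hmono
  have hL' : L := by
    have himp : ((bfalse.down : Bool) = true → L) → ((btrue.down : Bool) = true → L) := hmono
    exact himp (fun hcon => absurd hcon (by decide)) rfl
  obtain ⟨q₀, q₁, hle, f₀, f₁⟩ := hL'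
  refine ⟨ap (pullback.fst f g) q₀, ap (pullback.fst f g) q₁, ap_mono _ hle, ?_, ?_⟩
  · rw [pb_cond f g q₀, f₀]
    rfl
  · rw [pb_cond f g q₁, f₁]
    rfl

end RegEpi

section Descent
variable {A B : Preord.{u}} (f : A ⟶ B)

theorem Rmap_fst {Y Y' : Over B} (u : Y ⟶ Y') (p : ↥(pullback Y.hom f)) :
    ap (pullback.fst Y'.hom f) (ap ((Over.pullback f).map u).left p)
      = ap u.left (ap (pullback.fst Y.hom f) p) := by
  have hcomp : ((Over.pullback f).map u).left ≫ pullback.fst Y'.hom f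
      = pullback.fst Y.hom f ≫ u.left := by
    simp [Over.pullback]; erw [pullback.lift_fst]
  rw [← ap_comp, hcomp, ap_comp]

theorem Rmap_snd {Y Y' : Over B} (u : Y ⟶ Y') (p : ↥(pullback Y.hom f)) :
    ap (pullback.snd Y'.hom f) (ap ((Over.pullback f).map u).left p)
      = ap (pullback.snd Y.hom f) p := by
  have hcomp : ((Over.pullback f).map u).left ≫ pullback.snd Y'.hom f
      = pullback.snd Y.hom f := by
    simp [Over.pullback]; erw [pullback.lift_snd]
  rw [← ap_comp, hcomp]

theorem counit_left (Y : Over B) :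
    ((Over.mapPullbackAdj f).counit.app Y).left = pullback.fst Y.hom f := by
  rw [Over.mapPullbackAdj_counit_app]
  simp

theorem algHom_snd {Y Y' : Over B}
    (hA : (Monad.comparison (Over.mapPullbackAdj f)).obj Y ⟶
      (Monad.comparison (Over.mapPullbackAdj f)).obj Y')
    (p : ↥(pullback Y.hom f)) :
    ap (pullback.snd Y'.hom f) (ap hA.f.left p) = ap (pullback.snd Y.hom f) p := by
  have h2 : hA.f.left ≫ pullback.snd Y'.hom f = pullback.snd Y.hom f := Over.w hA.f
  erw [← ap_comp, h2]; rfl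

theorem algHom_key {Y Y' : Over B}
    (hA : (Monad.comparison (Over.mapPullbackAdj f)).obj Y ⟶
      (Monad.comparison (Over.mapPullbackAdj f)).obj Y')
    (p p' : ↥(pullback Y.hom f))
    (e : ap (pullback.fst Y.hom f) p = ap (pullback.fst Y.hom f) p') :
    ap (pullback.fst Y'.hom f) (ap hA.f.left p)
      = ap (pullback.fst Y'.hom f) (ap hA.f.left p') := by
  have hcond : ap ((Over.map f).obj ((Over.pullback f).obj Y)).hom p
      = ap f (ap (pullback.snd Y.hom f) p') := by
    have h0 : ap ((Over.map f).obj ((Over.pullback f).obj Y)).hom p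
        = ap f (ap (pullback.snd Y.hom f) p) := rfl
    rw [h0, ← pb_cond Y.hom f p, e, pb_cond Y.hom f p']
  set q := pbMk ((Over.map f).obj ((Over.pullback f).obj Y)).hom f p
      (ap (pullback.snd Y.hom f) p') hcond with hqdef
  have heq : ap ((Monad.comparison (Over.mapPullbackAdj f)).obj Y').a.left
      (ap ((Over.mapPullbackAdj f).toMonad.map hA.f).left q)
      = ap hA.f.left (ap ((Monad.comparison (Over.mapPullbackAdj f)).obj Y).a.left q) :=
    ap_congr (congrArg CommaMorphism.left hA.h) q
  have hc : ((Over.mapPullbackAdj f).counit.app Y).left = pullback.fst Y.hom f :=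
    counit_left f Y
  have hc' : ((Over.mapPullbackAdj f).counit.app Y').left = pullback.fst Y'.hom f :=
    counit_left f Y'
  have hq_fst : ap (pullback.fst ((Over.map f).obj ((Over.pullback f).obj Y)).hom f) q = p :=
    pbMk_fst _ f p _ hcond
  have hq_snd : ap (pullback.snd ((Over.map f).obj ((Over.pullback f).obj Y)).hom f) q
      = ap (pullback.snd Y.hom f) p' :=
    pbMk_snd _ f p _ hcond
  have hfst_a : ap (pullback.fst Y.hom f)
      (ap ((Monad.comparison (Over.mapPullbackAdj f)).obj Y).a.left q)
      = ap ((Over.mapPullbackAdj f).counit.app Y).left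
          (ap (pullback.fst ((Over.map f).obj ((Over.pullback f).obj Y)).hom f) q) :=
    Rmap_fst f ((Over.mapPullbackAdj f).counit.app Y) q
  have hsnd_a : ap (pullback.snd Y.hom f)
      (ap ((Monad.comparison (Over.mapPullbackAdj f)).obj Y).a.left q)
      = ap (pullback.snd ((Over.map f).obj ((Over.pullback f).obj Y)).hom f) q :=
    Rmap_snd f ((Over.mapPullbackAdj f).counit.app Y) q
  have hrp' : ap ((Monad.comparison (Over.mapPullbackAdj f)).obj Y).a.left q = p' := by
    apply pb_ext Y.hom f
    · erw [hfst_a, hc, hq_fst]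
      exact e
    · erw [hsnd_a, hq_snd]
  rw [hrp'] at heq
  have hfst_a' : ap (pullback.fst Y'.hom f)
      (ap ((Monad.comparison (Over.mapPullbackAdj f)).obj Y').a.left
        (ap ((Over.mapPullbackAdj f).toMonad.map hA.f).left q))
      = ap ((Over.mapPullbackAdj f).counit.app Y').left
          (ap (pullback.fst ((Over.map f).obj ((Over.pullback f).obj Y')).hom f)
            (ap ((Over.mapPullbackAdj f).toMonad.map hA.f).left q)) :=
    Rmap_fst f ((Over.mapPullbackAdj f).counit.app Y') _
  have hT_fst : ap (pullback.fst ((Over.map f).obj ((Over.pullback f).obj Y')).hom f)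
      (ap ((Over.mapPullbackAdj f).toMonad.map hA.f).left q)
      = ap hA.f.left (ap (pullback.fst ((Over.map f).obj ((Over.pullback f).obj Y)).hom f) q) :=
    Rmap_fst f ((Over.map f).map hA.f) q
  have hfinal : ap (pullback.fst Y'.hom f) (ap hA.f.left p')
      = ap (pullback.fst Y'.hom f) (ap hA.f.left p) := by
    calc ap (pullback.fst Y'.hom f) (ap hA.f.left p')
        = ap (pullback.fst Y'.hom f)
            (ap ((Monad.comparison (Over.mapPullbackAdj f)).obj Y').a.left
              (ap ((Over.mapPullbackAdj f).toMonad.map hA.f).left q)) := by erw [heq]; rfl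
      _ = ap ((Over.mapPullbackAdj f).counit.app Y').left
            (ap (pullback.fst ((Over.map f).obj ((Over.pullback f).obj Y')).hom f)
              (ap ((Over.mapPullbackAdj f).toMonad.map hA.f).left q)) := hfst_a'
      _ = ap ((Over.mapPullbackAdj f).counit.app Y').left (ap hA.f.left p) := by
            erw [hT_fst, hq_fst]; rfl
      _ = ap (pullback.fst Y'.hom f) (ap hA.f.left p) := by rw [hc']
  exact hfinal.symm

theorem pullback_faithful (hsurj : ∀ b : ↥B, ∃ a, ap f a = b) :
    (Over.pullback f : Over B ⥤ Over A).Faithful := by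
  refine { map_injective := fun {Y Y'} {g₁ g₂} h => ?_ }
  apply Over.OverMorphism.ext
  apply hom_ext'
  intro y
  obtain ⟨a, ha⟩ := hsurj (ap Y.hom y)
  have h1 := Rmap_fst f g₁ (pbMk Y.hom f y a ha.symm)
  have h2 := Rmap_fst f g₂ (pbMk Y.hom f y a ha.symm)
  rw [h] at h1
  have h3 := h1.symm.trans h2
  rw [pbMk_fst] at h3
  exact h3

theorem lift_to_faithful
    (hsurj : ∀ b : ↥B, ∃ a, ap f a = b) :
    (Monad.comparison (Over.mapPullbackAdj f)).Faithful := by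
  haveI := pullback_faithful f hsurj
  infer_instance

theorem lift_to_full
    (hl : ∀ b₀ b₁ : ↥B, b₀ ≤ b₁ → ∃ a₀ a₁ : ↥A, a₀ ≤ a₁ ∧ ap f a₀ = b₀ ∧ ap f a₁ = b₁) :
    (Monad.comparison (Over.mapPullbackAdj f)).Full := by
  have hsurj : ∀ b : ↥B, ∃ a, ap f a = b := fun b => by
    obtain ⟨a₀, _, _, e, _⟩ := hl b b le_rfl
    exact ⟨a₀, e⟩
  refine { map_surjective := fun {Y Y'} hA => ?_ }
  have hsec : ∀ y : ↥Y.left, ∃ p : ↥(pullback Y.hom f), ap (pullback.fst Y.hom f) p = y := by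
    intro y
    obtain ⟨a, ha⟩ := hsurj (ap Y.hom y)
    exact ⟨pbMk Y.hom f y a ha.symm, pbMk_fst _ _ _ _ _⟩
  choose σ hσ using hsec
  let gfun : ↥Y.left → ↥Y'.left := fun y =>
    ap (pullback.fst Y'.hom f) (ap hA.f.left (σ y))
  have hmono : Monotone gfun := by
    intro y y' hy
    obtain ⟨a₀, a₁, ha, e₀, e₁⟩ := hl (ap Y.hom y) (ap Y.hom y') (ap_mono Y.hom hy)
    have hpp' : pbMk Y.hom f y a₀ e₀.symm ≤ pbMk Y.hom f y' a₁ e₁.symm :=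
      pb_le Y.hom f (by rw [pbMk_fst, pbMk_fst]; exact hy)
        (by rw [pbMk_snd, pbMk_snd]; exact ha)
    have k1 : gfun y = ap (pullback.fst Y'.hom f) (ap hA.f.left (pbMk Y.hom f y a₀ e₀.symm)) :=
      algHom_key f hA (σ y) _ (by rw [hσ, pbMk_fst])
    have k2 : gfun y' = ap (pullback.fst Y'.hom f) (ap hA.f.left (pbMk Y.hom f y' a₁ e₁.symm)) :=
      algHom_key f hA (σ y') _ (by rw [hσ, pbMk_fst])
    rw [k1, k2]
    exact ap_mono (pullback.fst Y'.hom f) (ap_mono hA.f.left hpp')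
  have hover : (Preord.ofHom ⟨gfun, hmono⟩ : Y.left ⟶ Y'.left) ≫ Y'.hom = Y.hom := hom_ext' fun y => by
    show ap Y'.hom (gfun y) = ap Y.hom y
    have c1 : ap Y'.hom (gfun y)
        = ap f (ap (pullback.snd Y'.hom f) (ap hA.f.left (σ y))) := pb_cond Y'.hom f _
    rw [c1, algHom_snd f hA (σ y), ← pb_cond Y.hom f (σ y), hσ]
  refine ⟨Over.homMk (Preord.ofHom ⟨gfun, hmono⟩) hover, ?_⟩
  apply Monad.Algebra.Hom.ext
  show (Over.pullback f).map (Over.homMk (Preord.ofHom ⟨gfun, hmono⟩) hover) = hA.f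
  apply Over.OverMorphism.ext
  apply hom_ext'
  intro p
  apply pb_ext Y'.hom f
  · rw [Rmap_fst]
    show gfun (ap (pullback.fst Y.hom f) p) = ap (pullback.fst Y'.hom f) (ap hA.f.left p)
    exact algHom_key f hA (σ (ap (pullback.fst Y.hom f) p)) p (by rw [hσ])
  · erw [Rmap_snd, algHom_snd]

/-- A two-element indiscrete preorder. -/
structure Indisc : Type u where
  t : Bool

instance : Preorder Indisc.{u} where
  le _ _ := True
  le_refl _ := trivial
  le_trans _ _ _ _ _ := trivial

/-- A two-element discrete preorder. -/
structure DiscB : Type u where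
  t : Bool

instance : Preorder DiscB.{u} where
  le x y := x = y
  le_refl _ := rfl
  le_trans a b c h1 h2 := by
    have h1' : a = b := h1
    have h2' : b = c := h2
    show a = c
    rw [h1', h2']

theorem DiscB.le_eq {x y : DiscB.{u}} (h : x ≤ y) : x = y := h

theorem DiscB.eq_le {x y : DiscB.{u}} (h : x = y) : x ≤ y := le_of_eq h

theorem faithful_to_surj
    (hfaith : (Monad.comparison (Over.mapPullbackAdj f)).Faithful) :
    ∀ b : ↥B, ∃ a, ap f a = b := by
  intro b
  by_contra hno
  push_neg at hno
  let Yl : Preord.{u} := Preord.of Indisc.{u}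
  let Y : Over B := Over.mk (Preord.ofHom ⟨fun _ => b, monotone_const⟩ : Yl ⟶ B)
  let sw : Y ⟶ Y :=
    Over.homMk (Preord.ofHom ⟨fun x => ⟨!x.t⟩, fun _ _ _ => trivial⟩ : Yl ⟶ Yl) (hom_ext' fun _ => rfl)
  have hPYempty : ∀ p : ↥(pullback Y.hom f), False := by
    intro p
    exact hno (ap (pullback.snd Y.hom f) p) (pb_cond Y.hom f p).symm
  have hK : (Monad.comparison (Over.mapPullbackAdj f)).map sw
      = (Monad.comparison (Over.mapPullbackAdj f)).map (𝟙 Y) := by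
    apply Monad.Algebra.Hom.ext
    show (Over.pullback f).map sw = (Over.pullback f).map (𝟙 Y)
    apply Over.OverMorphism.ext
    apply hom_ext'
    intro p
    exact (hPYempty p).elim
  have heq : sw = 𝟙 Y := hfaith.map_injective hK
  have hx := congrArg (fun (k : Y ⟶ Y) => ap k.left ⟨false⟩) heq
  exact Bool.noConfusion (congrArg Indisc.t hx)

theorem descent_to_lift (hd : IsDescentMorphism f) :
    ∀ b₀ b₁ : ↥B, b₀ ≤ b₁ → ∃ a₀ a₁ : ↥A, a₀ ≤ a₁ ∧ ap f a₀ = b₀ ∧ ap f a₁ = b₁ := by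
  obtain ⟨hfull, hfaith⟩ := hd
  have hsurj := faithful_to_surj f hfaith
  intro b₀ b₁ hb
  by_contra hno
  push_neg at hno
  let Yl : Preord.{u} := Preord.of DiscB.{u}
  let β : Yl ⟶ B := Preord.ofHom ⟨fun x => bif x.t then b₁ else b₀, by
    intro x y hxy
    rw [DiscB.le_eq hxy]⟩
  let Y : Over B := Over.mk β
  let Y' : Over B := Over.mk (chainHom b₀ b₁ hb)
  have hcondu : ∀ p : ↥(pullback Y'.hom f),
      ap β (⟨(ap (pullback.fst Y'.hom f) p).down⟩ : DiscB.{u})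
        = ap f (ap (pullback.snd Y'.hom f) p) := fun p => pb_cond Y'.hom f p
  let ufun : ↥(pullback Y'.hom f) → ↥(pullback Y.hom f) := fun p =>
    pbMk Y.hom f ⟨(ap (pullback.fst Y'.hom f) p).down⟩ (ap (pullback.snd Y'.hom f) p)
      (hcondu p)
  have humono : Monotone ufun := by
    intro p q hpq
    have hf1 : ap (pullback.fst Y'.hom f) p ≤ ap (pullback.fst Y'.hom f) q := ap_mono _ hpq
    have hs1 : ap (pullback.snd Y'.hom f) p ≤ ap (pullback.snd Y'.hom f) q := ap_mono _ hpq
    have hcases : (ap (pullback.fst Y'.hom f) p).down = (ap (pullback.fst Y'.hom f) q).down ∨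
        ((ap (pullback.fst Y'.hom f) p).down = false ∧
          (ap (pullback.fst Y'.hom f) q).down = true) := by
      have hb1 : (ap (pullback.fst Y'.hom f) p).down ≤ (ap (pullback.fst Y'.hom f) q).down := hf1
      revert hb1
      cases (ap (pullback.fst Y'.hom f) p).down <;>
        cases (ap (pullback.fst Y'.hom f) q).down <;> simp
    rcases hcases with hsame | ⟨hp0, hq1⟩
    · apply pb_le Y.hom f
      · rw [show ap (pullback.fst Y.hom f) (ufun p)
            = (⟨(ap (pullback.fst Y'.hom f) p).down⟩ : DiscB.{u}) from
            pbMk_fst Y.hom f _ _ (hcondu p),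
          show ap (pullback.fst Y.hom f) (ufun q)
            = (⟨(ap (pullback.fst Y'.hom f) q).down⟩ : DiscB.{u}) from
            pbMk_fst Y.hom f _ _ (hcondu q)]
        exact DiscB.eq_le (by rw [hsame])
      · rw [show ap (pullback.snd Y.hom f) (ufun p) = ap (pullback.snd Y'.hom f) p from
            pbMk_snd Y.hom f _ _ (hcondu p),
          show ap (pullback.snd Y.hom f) (ufun q) = ap (pullback.snd Y'.hom f) q from
            pbMk_snd Y.hom f _ _ (hcondu q)]
        exact hs1
    · exfalso
      refine hno (ap (pullback.snd Y'.hom f) p) (ap (pullback.snd Y'.hom f) q) hs1 ?_ ?_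
      · have := (pb_cond Y'.hom f p).symm
        rw [show ap (pullback.fst Y'.hom f) p = bfalse from ULift.ext _ _ hp0] at this
        exact this
      · have := (pb_cond Y'.hom f q).symm
        rw [show ap (pullback.fst Y'.hom f) q = btrue from ULift.ext _ _ hq1] at this
        exact this
  have hwu : (Preord.ofHom ⟨ufun, humono⟩ : (pullback Y'.hom f : Preord.{u}) ⟶ pullback Y.hom f) ≫
      pullback.snd Y.hom f = pullback.snd Y'.hom f := hom_ext' fun p =>
    pbMk_snd Y.hom f _ _ (hcondu p)
  let uOver : (Over.pullback f).obj Y' ⟶ (Over.pullback f).obj Y :=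
    Over.homMk (Preord.ofHom ⟨ufun, humono⟩) hwu
  have hufun : ∀ p, ap uOver.left p = ufun p := fun _ => rfl
  have hcompat : ((Over.mapPullbackAdj f).toMonad.map uOver) ≫
      ((Monad.comparison (Over.mapPullbackAdj f)).obj Y).a
      = ((Monad.comparison (Over.mapPullbackAdj f)).obj Y').a ≫ uOver := by
    apply Over.OverMorphism.ext
    apply hom_ext'
    intro q
    show ap ((Monad.comparison (Over.mapPullbackAdj f)).obj Y).a.left
        (ap ((Over.mapPullbackAdj f).toMonad.map uOver).left q)
      = ap uOver.left (ap ((Monad.comparison (Over.mapPullbackAdj f)).obj Y').a.left q)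
    have t1 : ap (pullback.fst Y.hom f)
        (ap ((Monad.comparison (Over.mapPullbackAdj f)).obj Y).a.left
          (ap ((Over.mapPullbackAdj f).toMonad.map uOver).left q))
        = ap ((Over.mapPullbackAdj f).counit.app Y).left
            (ap (pullback.fst ((Over.map f).obj ((Over.pullback f).obj Y)).hom f)
              (ap ((Over.mapPullbackAdj f).toMonad.map uOver).left q)) :=
      Rmap_fst f ((Over.mapPullbackAdj f).counit.app Y) _
    have t2 : ap (pullback.fst ((Over.map f).obj ((Over.pullback f).obj Y)).hom f)
        (ap ((Over.mapPullbackAdj f).toMonad.map uOver).left q)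
        = ap uOver.left
            (ap (pullback.fst ((Over.map f).obj ((Over.pullback f).obj Y')).hom f) q) :=
      Rmap_fst f ((Over.map f).map uOver) q
    have t3 : ap (pullback.snd Y.hom f)
        (ap ((Monad.comparison (Over.mapPullbackAdj f)).obj Y).a.left
          (ap ((Over.mapPullbackAdj f).toMonad.map uOver).left q))
        = ap (pullback.snd ((Over.map f).obj ((Over.pullback f).obj Y)).hom f)
            (ap ((Over.mapPullbackAdj f).toMonad.map uOver).left q) :=
      Rmap_snd f ((Over.mapPullbackAdj f).counit.app Y) _
    have t3' : ap (pullback.snd ((Over.map f).obj ((Over.pullback f).obj Y)).hom f)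
        (ap ((Over.mapPullbackAdj f).toMonad.map uOver).left q)
        = ap (pullback.snd ((Over.map f).obj ((Over.pullback f).obj Y')).hom f) q :=
      Rmap_snd f ((Over.map f).map uOver) q
    have t4 : ap (pullback.fst Y'.hom f)
        (ap ((Monad.comparison (Over.mapPullbackAdj f)).obj Y').a.left q)
        = ap ((Over.mapPullbackAdj f).counit.app Y').left
            (ap (pullback.fst ((Over.map f).obj ((Over.pullback f).obj Y')).hom f) q) :=
      Rmap_fst f ((Over.mapPullbackAdj f).counit.app Y') q
    have t5 : ap (pullback.snd Y'.hom f)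
        (ap ((Monad.comparison (Over.mapPullbackAdj f)).obj Y').a.left q)
        = ap (pullback.snd ((Over.map f).obj ((Over.pullback f).obj Y')).hom f) q :=
      Rmap_snd f ((Over.mapPullbackAdj f).counit.app Y') q
    apply pb_ext Y.hom f
    · erw [t1, counit_left f Y, t2, hufun]
      rw [show ap (pullback.fst Y.hom f)
          (ufun (ap (pullback.fst ((Over.map f).obj ((Over.pullback f).obj Y')).hom f) q))
          = (⟨(ap (pullback.fst Y'.hom f)
              (ap (pullback.fst ((Over.map f).obj ((Over.pullback f).obj Y')).hom f) q)).down⟩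
              : DiscB.{u}) from pbMk_fst Y.hom f _ _ _]
      rw [hufun]
      rw [show ap (pullback.fst Y.hom f)
          (ufun (ap ((Monad.comparison (Over.mapPullbackAdj f)).obj Y').a.left q))
          = (⟨(ap (pullback.fst Y'.hom f)
              (ap ((Monad.comparison (Over.mapPullbackAdj f)).obj Y').a.left q)).down⟩
              : DiscB.{u}) from pbMk_fst Y.hom f _ _ _]
      rw [t4, counit_left f Y']
    · erw [t3, t3', hufun]
      rw [show ap (pullback.snd Y.hom f)
          (ufun (ap ((Monad.comparison (Over.mapPullbackAdj f)).obj Y').a.left q))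
          = ap (pullback.snd Y'.hom f)
              (ap ((Monad.comparison (Over.mapPullbackAdj f)).obj Y').a.left q) from
          pbMk_snd Y.hom f _ _ _]
      rw [t5]
  obtain ⟨g, hg⟩ := hfull.map_surjective
    (⟨uOver, hcompat⟩ : (Monad.comparison (Over.mapPullbackAdj f)).obj Y' ⟶
      (Monad.comparison (Over.mapPullbackAdj f)).obj Y)
  have hgleft : (Over.pullback f).map g = uOver := congrArg Monad.Algebra.Hom.f hg
  obtain ⟨a₀, ha₀⟩ := hsurj b₀
  obtain ⟨a₁, ha₁⟩ := hsurj b₁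
  have e₀ : ap g.left bfalse = (⟨false⟩ : DiscB.{u}) := by
    have r1 := Rmap_fst f g (pbMk Y'.hom f bfalse a₀ ha₀.symm)
    erw [hgleft] at r1; erw [pbMk_fst Y'.hom f bfalse a₀ ha₀.symm] at r1
    rw [← r1, hufun]
    rw [show ap (pullback.fst Y.hom f) (ufun (pbMk Y'.hom f bfalse a₀ ha₀.symm))
        = (⟨(ap (pullback.fst Y'.hom f) (pbMk Y'.hom f bfalse a₀ ha₀.symm)).down⟩
            : DiscB.{u}) from pbMk_fst Y.hom f _ _ _]
    erw [pbMk_fst]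
    rfl
  have e₁ : ap g.left btrue = (⟨true⟩ : DiscB.{u}) := by
    have r1 := Rmap_fst f g (pbMk Y'.hom f btrue a₁ ha₁.symm)
    erw [hgleft] at r1; erw [pbMk_fst Y'.hom f btrue a₁ ha₁.symm] at r1
    rw [← r1, hufun]
    rw [show ap (pullback.fst Y.hom f) (ufun (pbMk Y'.hom f btrue a₁ ha₁.symm))
        = (⟨(ap (pullback.fst Y'.hom f) (pbMk Y'.hom f btrue a₁ ha₁.symm)).down⟩
            : DiscB.{u}) from pbMk_fst Y.hom f _ _ _]
    erw [pbMk_fst]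
    rfl
  have hle : ap g.left bfalse ≤ ap g.left btrue := ap_mono g.left ble
  rw [e₀, e₁] at hle
  exact Bool.noConfusion (congrArg DiscB.t (DiscB.le_eq hle))

end Descent


/-- **Theorem (Janelidze–Sobral).** A morphism `f : A ⟶ B` in `Ord` is a descent morphism,
equivalently a pullback-stable regular epimorphism, iff every `b₀ ≤ b₁` in `B` lifts to some
`a₀ ≤ a₁` in `A`. -/
theorem statement1 {A B : Preord.{u}} (f : A ⟶ B) :
    (IsDescentMorphism f ↔
      (∀ b₀ b₁ : ↥B, b₀ ≤ b₁ → ∃ a₀ a₁ : ↥A, a₀ ≤ a₁ ∧ f a₀ = b₀ ∧ f a₁ = b₁)) ∧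
    (IsStableRegularEpi f ↔
      (∀ b₀ b₁ : ↥B, b₀ ≤ b₁ → ∃ a₀ a₁ : ↥A, a₀ ≤ a₁ ∧ f a₀ = b₀ ∧ f a₁ = b₁)) := by
  constructor
  · constructor
    · intro hd
      exact descent_to_lift f hd
    · intro hl
      exact ⟨lift_to_full f hl, lift_to_faithful f (fun b => by
        obtain ⟨a₀, _, _, e, _⟩ := hl b b le_rfl
        exact ⟨a₀, e⟩)⟩
  · constructor
    · intro hs
      exact stable_to_lift f hs
    · intro hl
      exact liftcond_to_stable f hl

end Desc
end

section
/- A morphism f : A → B in Ord is an effective descent morphism if and only if for all b₀ ≤ b₁ ≤ b₂ in B there exist a₀ ≤ a₁ ≤ a₂ in A with f(a₀) = b₀, f(a₁) = b₁ and f(a₂) = b₂. -/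
open CategoryTheory Limits

universe u
universe u₁ v₁ u₂ v₂

attribute [local instance] CategoryTheory.ConcreteCategory.instFunLike

namespace Desc

variable (X : Type u) [Preorder X]

variable {X}

variable {X : Type u} [Preorder X]

variable (X : Type u) [Preorder X]

/-! ### Auxiliary material for the proof of the Janelidze–Sobral theorem -/

universe w₁ w₂ x₁ x₂

section Transfer


variable {C : Type x₁} [Category.{w₁} C] {D : Type x₂} [Category.{w₂} D]

/-- Two adjunctions with the same left adjoint give isomorphic monads. -/
def monadIsoOfSameLeft {L : C ⥤ D} {R R' : D ⥤ C} (adj : L ⊣ R) (adj' : L ⊣ R') :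
    adj.toMonad ≅ adj'.toMonad :=
  MonadIso.mk (Functor.isoWhiskerLeft L (Adjunction.rightAdjointUniq adj adj'))
    (fun X => by exact Adjunction.unit_rightAdjointUniq_hom_app adj adj' X)
    (fun X => by
      dsimp [Adjunction.toMonad]
      simp only [Category.assoc]
      rw [NatTrans.naturality_assoc (Adjunction.rightAdjointUniq adj adj').hom]
      rw [← R'.map_comp, Adjunction.rightAdjointUniq_hom_app_counit]
      exact NatTrans.naturality _ _)

theorem comparison_isEquivalence_of {L : C ⥤ D} {R R' : D ⥤ C} (adj : L ⊣ R) (adj' : L ⊣ R')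
    (h : (Monad.comparison adj).IsEquivalence) : (Monad.comparison adj').IsEquivalence := by
  let e := Monad.algebraEquivOfIsoMonads (monadIsoOfSameLeft adj adj')
  have key : Monad.comparison adj ⋙ e.functor ≅ Monad.comparison adj' := by
    refine NatIso.ofComponents (fun X => Monad.Algebra.isoMk
      ((Adjunction.rightAdjointUniq adj adj').app X) ?_) ?_
    · change R'.map (L.map ((Adjunction.rightAdjointUniq adj adj').hom.app X)) ≫ R'.map (adj'.counit.app X) =
        ((Adjunction.rightAdjointUniq adj adj').inv.app (L.obj (R.obj X)) ≫ R.map (adj.counit.app X)) ≫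
          (Adjunction.rightAdjointUniq adj adj').hom.app X
      rw [← R'.map_comp, Adjunction.rightAdjointUniq_hom_app_counit]
      simp
    · intro X Y g
      ext
      exact ((Adjunction.rightAdjointUniq adj adj').hom.naturality g)
  rw [← Functor.isEquivalence_iff_of_iso key]
  infer_instance

theorem comparison_isEquivalence_iff {L : C ⥤ D} {R R' : D ⥤ C} (adj : L ⊣ R) (adj' : L ⊣ R') :
    (Monad.comparison adj).IsEquivalence ↔ (Monad.comparison adj').IsEquivalence :=
  ⟨comparison_isEquivalence_of adj adj', comparison_isEquivalence_of adj' adj⟩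


end Transfer

section JS


lemma elt_w {X : Preord.{u}} {D D' : Over X} (h : D ⟶ D') (x : ↥D.left) :
    D'.hom (h.left x) = D.hom x := by
  conv_rhs => rw [← Over.w h]
  rfl

lemma over_hom_ext {X : Preord.{u}} {D D' : Over X} (h h' : D ⟶ D')
    (w : ∀ x, h.left x = h'.left x) : h = h' := by
  apply Over.OverMorphism.ext
  apply Preord.ext
  exact w

lemma elt_eq {X : Preord.{u}} {D D' : Over X} {g g' : D ⟶ D'} (h : g = g') (x : ↥D.left) :
    g.left x = g'.left x := by rw [h]

variable {A B : Preord.{u}} (f : A ⟶ B)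

def pbType (D : Over B) : Type u := {p : ↥A × ↥D.left // f p.1 = D.hom p.2}

instance (D : Over B) : Preorder (pbType f D) :=
  inferInstanceAs (Preorder {p : ↥A × ↥D.left // f p.1 = D.hom p.2})

def Pb : Over B ⥤ Over A where
  obj D := Over.mk (Preord.ofHom ⟨fun p => p.1.1, fun _ _ h => h.1⟩ : Preord.of (pbType f D) ⟶ A)
  map {D D'} h := Over.homMk
    (Preord.ofHom ⟨fun p => ⟨(p.1.1, h.left p.1.2), p.2.trans (elt_w h p.1.2).symm⟩,
      fun _ _ hle => ⟨hle.1, h.left.hom.monotone hle.2⟩⟩ :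
        Preord.of (pbType f D) ⟶ Preord.of (pbType f D')) rfl
  map_id D := over_hom_ext _ _ (fun x => rfl)
  map_comp g h := over_hom_ext _ _ (fun x => rfl)

def sndHom (D : Over B) : Preord.of (pbType f D) ⟶ D.left :=
  Preord.ofHom ⟨fun p => p.1.2, fun _ _ h => h.2⟩

def pbAdj : Over.map f ⊣ Pb f :=
  Adjunction.mkOfHomEquiv
    { homEquiv := fun E D =>
        { toFun := fun g => Over.homMk
            (Preord.ofHom ⟨fun e => ⟨(E.hom e, g.left e), (elt_w g e).symm⟩,
              fun _ _ h => ⟨E.hom.hom.monotone h, g.left.hom.monotone h⟩⟩ :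
                E.left ⟶ Preord.of (pbType f D)) rfl
          invFun := fun k => Over.homMk (k.left ≫ sndHom f D)
            (by
              apply Preord.ext; intro e
              exact ((k.left e).2).symm.trans (congrArg f (elt_w k e)))
          left_inv := fun g => over_hom_ext _ _ (fun e => rfl)
          right_inv := fun k => over_hom_ext _ _
            (fun e => Subtype.ext (Prod.ext (elt_w k e).symm rfl)) }
      homEquiv_naturality_left_symm := fun g h => over_hom_ext _ _ (fun e => rfl)
      homEquiv_naturality_right := fun g h => over_hom_ext _ _
        (fun e => Subtype.ext (Prod.ext rfl rfl)) }

variable {f}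

/-! ### Faithful and Full -/

theorem kFaithful (hs : ∀ b : ↥B, ∃ a : ↥A, f a = b) :
    (Monad.comparison (pbAdj f)).Faithful where
  map_injective {D₁ D₂} {h₁ h₂} heq := by
    have he : (Pb f).map h₁ = (Pb f).map h₂ := congrArg Monad.Algebra.Hom.f heq
    refine over_hom_ext _ _ (fun d => ?_)
    obtain ⟨a, ha⟩ := hs (D₁.hom d)
    exact congrArg (fun (q : pbType f D₂) => q.1.2) (elt_eq he ⟨(a, d), ha⟩)

theorem kFull (hs : ∀ b : ↥B, ∃ a : ↥A, f a = b)
    (hl : ∀ b₀ b₁ : ↥B, b₀ ≤ b₁ → ∃ a₀ a₁ : ↥A, a₀ ≤ a₁ ∧ f a₀ = b₀ ∧ f a₁ = b₁) :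
    (Monad.comparison (pbAdj f)).Full where
  map_surjective {D₁ D₂} g := by
    classical
    have snd_eq : ∀ (x a : ↥A) (d : ↥D₁.left) (hx : f x = D₁.hom d) (ha : f a = D₁.hom d),
        (g.f.left ⟨(x, d), hx⟩).1.2 = (g.f.left ⟨(a, d), ha⟩).1.2 := by
      intro x a d hx ha
      exact (congrArg (fun (q : pbType f D₂) => q.1.2)
        (elt_eq g.h ⟨(x, ⟨(a, d), ha⟩), hx.trans ha.symm⟩)).symm
    have fst_eq : ∀ (w : pbType f D₁), (g.f.left w).1.1 = w.1.1 := fun w => elt_w g.f w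
    let hfun : ↥D₁.left → ↥D₂.left := fun d =>
      (g.f.left ⟨((hs (D₁.hom d)).choose, d), (hs (D₁.hom d)).choose_spec⟩).1.2
    have hover : ∀ d, D₂.hom (hfun d) = D₁.hom d := by
      intro d
      exact ((g.f.left _).2).symm.trans
        ((congrArg f (fst_eq _)).trans (hs (D₁.hom d)).choose_spec)
    have hmono : Monotone hfun := by
      intro d d' hdd
      obtain ⟨a₀, a₁, h01, hf0, hf1⟩ := hl _ _ (D₁.hom.hom.monotone hdd)
      calc hfun d = (g.f.left ⟨(a₀, d), hf0⟩).1.2 := snd_eq _ _ _ _ _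
        _ ≤ (g.f.left ⟨(a₁, d'), hf1⟩).1.2 := (g.f.left.hom.monotone ⟨h01, hdd⟩).2
        _ = hfun d' := (snd_eq _ _ _ _ _).symm
    refine ⟨Over.homMk (Preord.ofHom ⟨hfun, hmono⟩ : D₁.left ⟶ D₂.left)
      (Preord.ext hover), ?_⟩
    apply Monad.Algebra.Hom.ext
    refine over_hom_ext _ _ (fun w => ?_)
    exact Subtype.ext (Prod.ext (fst_eq w).symm ((snd_eq _ _ _ w.2 _).symm))



/-! ### Essential surjectivity -/

section EssSurj

variable {A B : Preord.{u}} {f : A ⟶ B} (Xa : ((pbAdj f).toMonad).Algebra)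

/-- The action of the algebra structure, elementwise. -/
def alg (x : ↥A) (e : ↥Xa.A.left) (h : f x = f (Xa.A.hom e)) : ↥Xa.A.left :=
  Xa.a.left (show pbType f ((Over.map f).obj Xa.A) from ⟨(x, e), h⟩)

lemma alg_over (x : ↥A) (e : ↥Xa.A.left) (h : f x = f (Xa.A.hom e)) :
    Xa.A.hom (alg Xa x e h) = x :=
  elt_w Xa.a _

lemma alg_unit (e : ↥Xa.A.left) (h : f (Xa.A.hom e) = f (Xa.A.hom e)) :
    alg Xa (Xa.A.hom e) e h = e :=
  elt_eq Xa.unit e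

lemma alg_assoc (x x' : ↥A) (e : ↥Xa.A.left) (h : f x' = f (Xa.A.hom e)) (h2 : f x = f x')
    (h3 : f x = f (Xa.A.hom (alg Xa x' e h))) :
    alg Xa x (alg Xa x' e h) h3 = alg Xa x e (h2.trans h) :=
  (elt_eq Xa.assoc (show ↥(((pbAdj f).toMonad.obj ((pbAdj f).toMonad.obj Xa.A)).left)
    from ⟨(x, ⟨(x', e), h⟩), h2⟩)).symm

lemma alg_mono {x x' : ↥A} {e e' : ↥Xa.A.left} {h h'} (hx : x ≤ x') (he : e ≤ e') :
    alg Xa x e h ≤ alg Xa x' e' h' :=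
  Xa.a.left.hom.monotone ⟨hx, he⟩

/-- Two elements are related if one is the transport of the other. -/
def algRel (e e' : ↥Xa.A.left) : Prop :=
  ∃ h : f (Xa.A.hom e') = f (Xa.A.hom e), alg Xa (Xa.A.hom e') e h = e'

lemma algRel_hom {e e' : ↥Xa.A.left} (r : algRel Xa e e') : f (Xa.A.hom e) = f (Xa.A.hom e') :=
  r.1.symm

lemma algRel_refl (e : ↥Xa.A.left) : algRel Xa e e := ⟨rfl, alg_unit Xa e rfl⟩

lemma alg_congr {x x' : ↥A} {e e' : ↥Xa.A.left} (hx : x = x') (he : e = e') {h h'} :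
    alg Xa x e h = alg Xa x' e' h' := by subst hx; subst he; rfl

lemma algRel_alg (x : ↥A) (e : ↥Xa.A.left) (h : f x = f (Xa.A.hom e)) :
    algRel Xa e (alg Xa x e h) :=
  ⟨(congrArg f (alg_over Xa x e h)).trans h, alg_congr Xa (alg_over Xa x e h) rfl⟩

lemma algRel_symm {e e' : ↥Xa.A.left} (r : algRel Xa e e') : algRel Xa e' e := by
  obtain ⟨h, he⟩ := r
  refine ⟨h.symm, ?_⟩
  have h'' : f (Xa.A.hom e) = f (Xa.A.hom (alg Xa (Xa.A.hom e') e h)) := by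
    rw [alg_over]; exact h.symm
  exact (alg_congr Xa rfl he.symm).trans
    ((alg_assoc Xa _ _ _ h h.symm h'').trans (alg_unit Xa e _))

lemma algRel_trans {e e' e'' : ↥Xa.A.left} (r : algRel Xa e e') (r' : algRel Xa e' e'') :
    algRel Xa e e'' := by
  obtain ⟨h1, he1⟩ := r
  obtain ⟨h2, he2⟩ := r'
  refine ⟨h2.trans h1, ?_⟩
  have hX : f (Xa.A.hom e'') = f (Xa.A.hom (alg Xa (Xa.A.hom e') e h1)) := by
    rw [alg_over]; exact h2
  exact (alg_assoc Xa _ _ _ h1 h2 hX).symm.trans ((alg_congr Xa rfl he1).trans he2)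

def algSetoid : Setoid ↥Xa.A.left :=
  ⟨algRel Xa, ⟨algRel_refl Xa, algRel_symm Xa, algRel_trans Xa⟩⟩

variable (hc : ∀ b₀ b₁ b₂ : ↥B, b₀ ≤ b₁ → b₁ ≤ b₂ →
  ∃ a₀ a₁ a₂ : ↥A, a₀ ≤ a₁ ∧ a₁ ≤ a₂ ∧ f a₀ = b₀ ∧ f a₁ = b₁ ∧ f a₂ = b₂)

def QuotD : Type u := Quotient (algSetoid Xa)

def quotLE (c c' : QuotD Xa) : Prop :=
  ∃ e e', Quotient.mk (algSetoid Xa) e = c ∧ Quotient.mk (algSetoid Xa) e' = c' ∧ e ≤ e'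

def quotPreorder : Preorder (QuotD Xa) where
  le := quotLE Xa
  le_refl c := by
    obtain ⟨e, rfl⟩ := Quotient.exists_rep c
    exact ⟨e, e, rfl, rfl, le_refl e⟩
  le_trans c₁ c₂ c₃ := by
    rintro ⟨e₁, e₂, rfl, rfl, h12⟩ ⟨e₂', e₃, he2, rfl, h23⟩
    have r : algRel Xa e₂ e₂' := Quotient.exact he2.symm
    obtain ⟨a₀, a₁, a₂, ha01, ha12, hf0, hf1, hf2⟩ :=
      hc (f (Xa.A.hom e₁)) (f (Xa.A.hom e₂)) (f (Xa.A.hom e₃))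
        (f.hom.monotone (Xa.A.hom.hom.monotone h12))
        ((algRel_hom Xa r) ▸ (f.hom.monotone (Xa.A.hom.hom.monotone h23)))
    have hh0 : f a₀ = f (Xa.A.hom e₁) := hf0
    have hh1 : f a₁ = f (Xa.A.hom e₂) := hf1
    have hh1' : f a₁ = f (Xa.A.hom e₂') := hf1.trans (algRel_hom Xa r)
    have hh2 : f a₂ = f (Xa.A.hom e₃) := hf2
    refine ⟨alg Xa a₀ e₁ hh0, alg Xa a₂ e₃ hh2,
      (Quotient.sound (algRel_symm Xa (algRel_alg Xa a₀ e₁ hh0))),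
      (Quotient.sound (algRel_symm Xa (algRel_alg Xa a₂ e₃ hh2))), ?_⟩
    have mid : alg Xa a₁ e₂ hh1 = alg Xa a₁ e₂' hh1' := by
      obtain ⟨h, he⟩ := r
      have h' : f a₁ = f (Xa.A.hom (alg Xa (Xa.A.hom e₂') e₂ h)) := by
        rw [alg_over]; exact hh1'
      exact (alg_assoc Xa a₁ (Xa.A.hom e₂') e₂ h (hh1.trans h.symm) h').symm.trans
        (alg_congr Xa rfl he)
    calc alg Xa a₀ e₁ hh0 ≤ alg Xa a₁ e₂ hh1 := alg_mono Xa ha01 h12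
      _ = alg Xa a₁ e₂' hh1' := mid
      _ ≤ alg Xa a₂ e₃ hh2 := alg_mono Xa ha12 h23

/-- The descended object. -/
def DObj : Over B :=
  Over.mk
    (letI := quotPreorder Xa hc; Preord.ofHom ⟨Quotient.lift (fun e => f (Xa.A.hom e)) (fun _ _ r => (algRel_hom Xa r)),
      by
        rintro c c' ⟨e, e', rfl, rfl, hee⟩
        exact f.hom.monotone (Xa.A.hom.hom.monotone hee)⟩ :
      @Preord.of (QuotD Xa) (quotPreorder Xa hc) ⟶ B)


def psiFun (e : ↥Xa.A.left) : pbType f (DObj Xa hc) :=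
  ⟨(Xa.A.hom e, Quotient.mk (algSetoid Xa) e), rfl⟩

lemma psi_mono {e e' : ↥Xa.A.left} (he : e ≤ e') : psiFun Xa hc e ≤ psiFun Xa hc e' :=
  ⟨Xa.A.hom.hom.monotone he, e, e', rfl, rfl, he⟩

lemma psi_inj : Function.Injective (psiFun Xa hc) := by
  intro e e' hee
  have hp : Xa.A.hom e = Xa.A.hom e' := congrArg (fun w => w.1.1) hee
  have hq : Quotient.mk (algSetoid Xa) e = Quotient.mk (algSetoid Xa) e' :=
    congrArg (fun (w : pbType f (DObj Xa hc)) => w.1.2) hee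
  obtain ⟨h, he2⟩ := Quotient.exact hq
  exact (((alg_congr Xa hp.symm rfl).trans (alg_unit Xa e (by rfl))).symm.trans he2 : e = e')

lemma psi_surj : Function.Surjective (psiFun Xa hc) := by
  rintro ⟨⟨x, c⟩, hw⟩
  obtain ⟨e, rfl⟩ := Quotient.exists_rep c
  have hw' : f x = f (Xa.A.hom e) := hw
  refine ⟨alg Xa x e hw', Subtype.ext (Prod.ext (alg_over Xa x e hw')
    (Quotient.sound (algRel_symm Xa (algRel_alg Xa x e hw')))) ⟩

lemma psi_reflect {e e' : ↥Xa.A.left} (h : psiFun Xa hc e ≤ psiFun Xa hc e') : e ≤ e' := by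
  obtain ⟨hp, e₁, e₂, h1, h2, h12⟩ := h
  obtain ⟨g1, hg1⟩ := (Quotient.exact h1 : algRel Xa e₁ e)
  obtain ⟨g2, hg2⟩ := (Quotient.exact h2 : algRel Xa e₂ e')
  calc e = alg Xa (Xa.A.hom e) e₁ g1 := hg1.symm
    _ ≤ alg Xa (Xa.A.hom e') e₂ g2 := alg_mono Xa hp h12
    _ = e' := hg2

noncomputable def psiEquiv : ↥Xa.A.left ≃ pbType f (DObj Xa hc) :=
  Equiv.ofBijective (psiFun Xa hc) ⟨psi_inj Xa hc, psi_surj Xa hc⟩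

noncomputable def overIso : Xa.A ≅ (Pb f).obj (DObj Xa hc) :=
  Over.isoMk
    { hom := (Preord.ofHom ⟨psiFun Xa hc, fun _ _ h => psi_mono Xa hc h⟩ :
        Xa.A.left ⟶ ((Pb f).obj (DObj Xa hc)).left)
      inv := (Preord.ofHom ⟨(psiEquiv Xa hc).symm, by
          intro w w' hww
          refine psi_reflect Xa hc ?_
          have h1 : psiFun Xa hc ((psiEquiv Xa hc).symm w) = w :=
            (psiEquiv Xa hc).apply_symm_apply w
          have h2 : psiFun Xa hc ((psiEquiv Xa hc).symm w') = w' :=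
            (psiEquiv Xa hc).apply_symm_apply w'
          rw [h1, h2]
          exact hww⟩ : ((Pb f).obj (DObj Xa hc)).left ⟶ Xa.A.left)
      hom_inv_id := Preord.ext (fun e => (psiEquiv Xa hc).symm_apply_apply e)
      inv_hom_id := Preord.ext (fun w => (psiEquiv Xa hc).apply_symm_apply w) }
    (Preord.ext (fun e => rfl))

lemma key_compat :
    Xa.a ≫ (overIso Xa hc).hom =
      ((pbAdj f).toMonad).map (overIso Xa hc).hom ≫
        ((Monad.comparison (pbAdj f)).obj (DObj Xa hc)).a := by
  refine over_hom_ext _ _ (fun q => ?_)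
  exact Subtype.ext (Prod.ext (alg_over Xa q.1.1 q.1.2 q.2)
    (Quotient.sound (algRel_symm Xa (algRel_alg Xa q.1.1 q.1.2 q.2))))

include hc in
theorem kEssSurj : (Monad.comparison (pbAdj f)).EssSurj where
  mem_essImage Xa := by
    refine ⟨DObj Xa hc, ⟨Monad.Algebra.isoMk (overIso Xa hc).symm ?_⟩⟩
    show ((pbAdj f).toMonad).map (overIso Xa hc).inv ≫ Xa.a =
      ((Monad.comparison (pbAdj f)).obj (DObj Xa hc)).a ≫ (overIso Xa hc).inv
    have key2 : Xa.a = ((pbAdj f).toMonad).map (overIso Xa hc).hom ≫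
        ((Monad.comparison (pbAdj f)).obj (DObj Xa hc)).a ≫ (overIso Xa hc).inv :=
      calc Xa.a = (Xa.a ≫ (overIso Xa hc).hom) ≫ (overIso Xa hc).inv := by simp
        _ = _ := congrArg (· ≫ (overIso Xa hc).inv) (key_compat Xa hc)
        _ = _ := Category.assoc _ _ _
    rw [key2, ← Functor.map_comp_assoc, Iso.inv_hom_id, CategoryTheory.Functor.map_id,
      Category.id_comp]
    rfl

end EssSurj

/-! ### Necessity -/

section Converse

variable {A B : Preord.{u}} {f : A ⟶ B}

lemma bool_le_cases {x y : Bool} (h : x ≤ y) : x = y ∨ (x = false ∧ y = true) := by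
  cases x <;> cases y <;> revert h <;> decide

theorem surj_of_eqv (hK : (Monad.comparison (pbAdj f)).IsEquivalence) (b : ↥B) :
    ∃ a : ↥A, f a = b := by
  by_contra hno
  push_neg at hno
  haveI := hK
  let Pt : Preord.{u} := Preord.of (ULift.{u} PUnit)
  letI instE : Preorder (ULift.{u} Empty) :=
    { le := fun _ _ => True
      lt := fun _ _ => False
      le_refl := fun _ => trivial
      le_trans := fun _ _ _ _ _ => trivial
      lt_iff_le_not_ge := fun a _ => ⟨False.elim, fun h => (h.2 trivial).elim⟩ }
  let Em : Preord.{u} := @Preord.of (ULift.{u} Empty) instE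
  let D₁ : Over B := Over.mk (Preord.ofHom ⟨fun _ => b, fun _ _ _ => le_refl b⟩ : Pt ⟶ B)
  let D₂ : Over B := Over.mk (Preord.ofHom ⟨fun e => e.down.elim, fun x _ _ => x.down.elim⟩ : Em ⟶ B)
  have elim₁ : ∀ w : pbType f D₁, False := fun w => hno w.1.1 w.2
  have elim₂ : ∀ w : pbType f D₂, False := fun w => w.1.2.down.elim
  let prIso : ((Pb f).obj D₁).left ≅ ((Pb f).obj D₂).left :=
    { hom := Preord.ofHom ⟨fun w => (elim₁ w).elim, fun w _ _ => (elim₁ w).elim⟩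
      inv := Preord.ofHom ⟨fun w => (elim₂ w).elim, fun w _ _ => (elim₂ w).elim⟩
      hom_inv_id := Preord.ext (fun w => (elim₁ w).elim)
      inv_hom_id := Preord.ext (fun w => (elim₂ w).elim) }
  let I : (Monad.comparison (pbAdj f)).obj D₁ ≅ (Monad.comparison (pbAdj f)).obj D₂ :=
    Monad.Algebra.isoMk (Over.isoMk prIso (Preord.ext (fun w => (elim₁ w).elim)))
      (over_hom_ext _ _ (fun q => (elim₁ q.1.2).elim))
  let J := (Monad.comparison (pbAdj f)).preimageIso I
  exact (J.hom.left (⟨PUnit.unit⟩ : ↥Pt)).down.elim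

theorem lift1_of_eqv (hK : (Monad.comparison (pbAdj f)).IsEquivalence) (b₀ b₁ : ↥B)
    (hb : b₀ ≤ b₁) : ∃ a₀ a₁ : ↥A, a₀ ≤ a₁ ∧ f a₀ = b₀ ∧ f a₁ = b₁ := by
  by_contra hno
  push_neg at hno
  haveI := hK
  let Dc : Preord.{u} := Preord.of (ULift.{u} Bool)
  let discOrd : Preorder (ULift.{u} Bool) :=
    { le := fun x y => x = y
      lt := fun _ _ => False
      le_refl := fun _ => rfl
      le_trans := fun _ _ _ h h' => Eq.trans h h'
      lt_iff_le_not_ge := fun a b => ⟨False.elim, fun h => (h.2 (Eq.symm h.1)).elim⟩ }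
  let Dd : Preord.{u} := @Preord.of (ULift.{u} Bool) discOrd
  let q : ULift.{u} Bool → ↥B := fun x => cond x.down b₁ b₀
  have qmono : ∀ x y : ULift.{u} Bool, (x.down ≤ y.down) → q x ≤ q y := by
    intro x y h
    rcases bool_le_cases h with h' | ⟨h1, h2⟩
    · exact le_of_eq (by rw [show q x = cond x.down b₁ b₀ from rfl, h'])
    · simp only [q, h1, h2, cond_true, cond_false]
      exact hb
  let D : Over B := Over.mk (@Preord.ofHom _ _ (@ULift.instPreorder Bool _) _ (@OrderHom.mk _ _ (@ULift.instPreorder Bool _) _ q (fun x y h => qmono x y h)) : Dc ⟶ B)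
  let D' : Over B := Over.mk (letI := discOrd; Preord.ofHom ⟨q, fun x y (h : x = y) => h ▸ le_refl (q x)⟩ : Dd ⟶ B)
  let h : D' ⟶ D :=
    Over.homMk (@Preord.ofHom _ _ discOrd (@ULift.instPreorder Bool _) (@OrderHom.mk _ _ discOrd (@ULift.instPreorder Bool _) (fun x : ULift.{u} Bool => x) (by intro x y (hxy : x = y); cases hxy; exact @le_refl (ULift.{u} Bool) (@ULift.instPreorder Bool _) _)) : Dd ⟶ Dc)
      (Preord.ext (fun x => rfl))
  -- the inverse of `(Pb f).map h`
  have hle : ∀ (w w' : pbType f D), w ≤ w' → w.1.2 = w'.1.2 := by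
    intro w w' hww
    have h2 : w.1.2.down ≤ w'.1.2.down := hww.2
    rcases bool_le_cases h2 with h' | ⟨h1', h2'⟩
    · exact ULift.ext _ _ h'
    · exfalso
      refine hno w.1.1 w'.1.1 hww.1 ?_ ?_
      · have := w.2
        rw [show D.hom w.1.2 = q w.1.2 from rfl] at this
        rw [this]
        simp [q, h1']
      · have := w'.2
        rw [show D.hom w'.1.2 = q w'.1.2 from rfl] at this
        rw [this]
        simp [q, h2']
  let inv0 : (Pb f).obj D ⟶ (Pb f).obj D' :=
    Over.homMk (Preord.ofHom ⟨fun w => ⟨w.1, w.2⟩,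
      fun w w' hww => ⟨hww.1, (ULift.ext _ _ (congrArg ULift.down (hle w w' hww)) :
        ((⟨w.1, w.2⟩ : pbType f D').1.2 ≤ (⟨w'.1, w'.2⟩ : pbType f D').1.2))⟩⟩ :
      ((Pb f).obj D).left ⟶ ((Pb f).obj D').left) rfl
  haveI : IsIso ((Pb f).map h) :=
    ⟨inv0, over_hom_ext _ _ (fun w => rfl), over_hom_ext _ _ (fun w => rfl)⟩
  haveI : IsIso ((Monad.forget ((pbAdj f).toMonad)).map ((Monad.comparison (pbAdj f)).map h)) := by
    show IsIso ((Pb f).map h)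
    infer_instance
  haveI : IsIso ((Monad.comparison (pbAdj f)).map h) :=
    isIso_of_reflects_iso _ (Monad.forget ((pbAdj f).toMonad))
  haveI : IsIso h := isIso_of_reflects_iso _ (Monad.comparison (pbAdj f))
  have hid : ∀ x : ↥Dc, (inv h).left x = x := by
    intro x
    have := elt_eq (IsIso.hom_inv_id h) x
    exact this
  have hmono := ((inv h).left).hom.monotone
    (show (⟨false⟩ : ↥Dc) ≤ ⟨true⟩ from (by decide : (false : Bool) ≤ true))
  rw [hid, hid] at hmono
  exact absurd (congrArg ULift.down (hmono : (⟨false⟩ : ULift.{u} Bool) = ⟨true⟩)) (by decide)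

theorem lift2_of_eqv (hK : (Monad.comparison (pbAdj f)).IsEquivalence) (b₀ b₁ b₂ : ↥B)
    (h01 : b₀ ≤ b₁) (h12 : b₁ ≤ b₂) :
    ∃ a₀ a₁ a₂ : ↥A, a₀ ≤ a₁ ∧ a₁ ≤ a₂ ∧ f a₀ = b₀ ∧ f a₁ = b₁ ∧ f a₂ = b₂ := by
  by_contra hno
  push_neg at hno
  haveI := hK
  obtain ⟨u₀, u₁, hu, hfu0, hfu1⟩ := lift1_of_eqv hK b₀ b₁ h01
  obtain ⟨v₁, v₂, hv, hfv1, hfv2⟩ := lift1_of_eqv hK b₁ b₂ h12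
  obtain ⟨w₀, w₂, hw, hfw0, hfw2⟩ := lift1_of_eqv hK b₀ b₂ (h01.trans h12)
  let bv : Fin 3 → ↥B := ![b₀, b₁, b₂]
  let ET : Type u := {p : ↥A × ULift.{u} (Fin 3) // f p.1 = bv p.2.down}
  let leET : ET → ET → Prop := fun p q => p.1.1 ≤ q.1.1 ∧
    (((q.1.2.down : ℕ) = p.1.2.down) ∨ ((q.1.2.down : ℕ) = p.1.2.down + 1))
  letI instET : Preorder ET :=
    { le := leET
      lt := fun p q => leET p q ∧ ¬ leET q p
      lt_iff_le_not_ge := fun _ _ => Iff.rfl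
      le_refl := fun p => ⟨le_refl _, Or.inl rfl⟩
      le_trans := by
        rintro p q r ⟨hpq, hl1⟩ ⟨hqr, hl2⟩
        refine ⟨hpq.trans hqr, ?_⟩
        rcases hl1 with h1 | h1 <;> rcases hl2 with h2 | h2
        · exact Or.inl (h2.trans h1)
        · exact Or.inr (by rw [h2, h1])
        · exact Or.inr (by rw [h2, h1])
        · exfalso
          have hr2 : (r.1.2.down : ℕ) < 3 := r.1.2.down.is_lt
          have hp0 : (p.1.2.down : ℕ) = 0 := by omega
          have hq1 : (q.1.2.down : ℕ) = 1 := by omega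
          have hr1 : (r.1.2.down : ℕ) = 2 := by omega
          have hp0' : p.1.2.down = (0 : Fin 3) := Fin.ext hp0
          have hq1' : q.1.2.down = (1 : Fin 3) := Fin.ext hq1
          have hr1' : r.1.2.down = (2 : Fin 3) := Fin.ext hr1
          refine hno p.1.1 q.1.1 r.1.1 hpq hqr ?_ ?_ ?_
          · rw [p.2, hp0']; rfl
          · rw [q.2, hq1']; rfl
          · rw [r.2, hr1'] ; rfl }
  let EP : Preord.{u} := @Preord.of ET instET
  let W : Over A := Over.mk (Preord.ofHom ⟨fun p => p.1.1, fun _ _ h => h.1⟩ : EP ⟶ A)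
  let ξ : ((pbAdj f).toMonad).obj W ⟶ W :=
    Over.homMk (Preord.ofHom ⟨fun w => ⟨(w.1.1, w.1.2.1.2), w.2.trans w.1.2.2⟩,
      fun _ _ hww => ⟨hww.1, hww.2.2⟩⟩ :
        (((pbAdj f).toMonad).obj W).left ⟶ EP) rfl
  let X : ((pbAdj f).toMonad).Algebra :=
    { A := W
      a := ξ
      unit := over_hom_ext _ _ (fun e => rfl)
      assoc := over_hom_ext _ _ (fun e => rfl) }
  let K := Monad.comparison (pbAdj f)
  let D := K.objPreimage X
  let ι : K.obj D ≅ X := K.objObjPreimageIso X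
  let φ : W ⟶ (Pb f).obj D := ι.inv.f
  let ψ : (Pb f).obj D ⟶ W := ι.hom.f
  have hφψ : ∀ e : ↥W.left, ψ.left (φ.left e) = e := by
    intro e
    exact elt_eq (congrArg Monad.Algebra.Hom.f ι.inv_hom_id) e
  have fstkey : ∀ w : ↥W.left, (φ.left w).1.1 = W.hom w := fun w => elt_w φ w
  have sndkey : ∀ (x a : ↥A) (i : ULift.{u} (Fin 3)) (pfx : f x = bv i.down)
      (pfa : f a = bv i.down),
      (φ.left ⟨(x, i), pfx⟩).1.2 = (φ.left ⟨(a, i), pfa⟩).1.2 := by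
    intro x a i pfx pfa
    exact (congrArg (fun (z : pbType f D) => z.1.2)
      (elt_eq ι.inv.h ⟨(x, ⟨(a, i), pfa⟩), pfx.trans pfa.symm⟩)).symm
  -- the four chosen elements of ET
  let e00 : ↥W.left := ⟨(u₀, ⟨0⟩), hfu0⟩
  let e11 : ↥W.left := ⟨(u₁, ⟨1⟩), hfu1⟩
  let e21 : ↥W.left := ⟨(v₁, ⟨1⟩), hfv1⟩
  let e22 : ↥W.left := ⟨(v₂, ⟨2⟩), hfv2⟩
  let e30 : ↥W.left := ⟨(w₀, ⟨0⟩), hfw0⟩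
  let e32 : ↥W.left := ⟨(w₂, ⟨2⟩), hfw2⟩
  let P00 : pbType f D := φ.left e00
  let P11 : pbType f D := φ.left e11
  let P21 : pbType f D := φ.left e21
  let P22 : pbType f D := φ.left e22
  let P30 : pbType f D := φ.left e30
  let P32 : pbType f D := φ.left e32
  have m1 : P00 ≤ P11 := φ.left.hom.monotone ⟨hu, Or.inr rfl⟩
  have m2 : P21 ≤ P22 := φ.left.hom.monotone ⟨hv, Or.inr rfl⟩
  have g1 : P11.1.2 = P21.1.2 := sndkey u₁ v₁ ⟨1⟩ hfu1 hfv1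
  have g0 : P00.1.2 = P30.1.2 := sndkey u₀ w₀ ⟨0⟩ hfu0 hfw0
  have g2 : P22.1.2 = P32.1.2 := sndkey v₂ w₂ ⟨2⟩ hfv2 hfw2
  have hd : P30.1.2 ≤ P32.1.2 := by
    rw [← g0, ← g2]
    exact le_trans m1.2 (g1 ▸ m2.2)
  have hP : P30 ≤ P32 := by
    refine ⟨?_, hd⟩
    rw [show P30.1.1 = W.hom e30 from fstkey e30, show P32.1.1 = W.hom e32 from fstkey e32]
    exact hw
  have hfin : e30 ≤ e32 := by
    have h30 := hφψ e30
    have h32 := hφψ e32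
    have := ψ.left.hom.monotone hP
    rw [show ψ.left P30 = e30 from h30, show ψ.left P32 = e32 from h32] at this
    exact this
  rcases hfin.2 with h | h
  · have h' : ((2 : Fin 3) : ℕ) = ((0 : Fin 3) : ℕ) := h
    exact absurd h' (by decide)
  · have h' : ((2 : Fin 3) : ℕ) = ((0 : Fin 3) : ℕ) + 1 := h
    exact absurd h' (by decide)

end Converse

theorem statement2_aux {A B : Preord.{u}} (f : A ⟶ B)
    (hK : (Monad.comparison (pbAdj f)).IsEquivalence) :
    ∀ b₀ b₁ b₂ : ↥B, b₀ ≤ b₁ → b₁ ≤ b₂ →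
      ∃ a₀ a₁ a₂ : ↥A, a₀ ≤ a₁ ∧ a₁ ≤ a₂ ∧ f a₀ = b₀ ∧ f a₁ = b₁ ∧ f a₂ = b₂ :=
  fun b₀ b₁ b₂ h01 h12 => lift2_of_eqv hK b₀ b₁ b₂ h01 h12

end JS

/-- **Theorem (Janelidze–Sobral).** A morphism `f : A ⟶ B` in `Ord` is an effective descent
morphism iff every chain `b₀ ≤ b₁ ≤ b₂` in `B` lifts to a chain `a₀ ≤ a₁ ≤ a₂` in `A`. -/
theorem statement2 {A B : Preord.{u}} (f : A ⟶ B) :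
    IsEffectiveDescentMorphism f ↔
      ∀ b₀ b₁ b₂ : ↥B, b₀ ≤ b₁ → b₁ ≤ b₂ →
        ∃ a₀ a₁ a₂ : ↥A, a₀ ≤ a₁ ∧ a₁ ≤ a₂ ∧ f a₀ = b₀ ∧ f a₁ = b₁ ∧ f a₂ = b₂ := by
  have tr := comparison_isEquivalence_iff (Over.mapPullbackAdj f) (pbAdj f)
  constructor
  · intro h
    exact statement2_aux f (tr.mp h)
  · intro hc
    refine tr.mpr ?_
    have hs : ∀ b : ↥B, ∃ a : ↥A, f a = b := by
      intro b
      obtain ⟨a₀, _, _, _, _, hf0, _, _⟩ := hc b b b (le_refl b) (le_refl b)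
      exact ⟨a₀, hf0⟩
    have hl : ∀ b₀ b₁ : ↥B, b₀ ≤ b₁ → ∃ a₀ a₁ : ↥A, a₀ ≤ a₁ ∧ f a₀ = b₀ ∧ f a₁ = b₁ := by
      intro b₀ b₁ h
      obtain ⟨a₀, a₁, _, h01, _, hf0, hf1, _⟩ := hc b₀ b₁ b₁ h (le_refl b₁)
      exact ⟨a₀, a₁, h01, hf0, hf1⟩
    exact ⟨kFaithful hs, kFull hs hl, kEssSurj hc⟩

end Desc
end

section
/- Let X be a locally complete ordered set. A morphism f : (α_j)_{j∈J} → (β_k)_{k∈K} in Fam(X) is an effective descent morphism if and only if f is a descent morphism and, for every family (σ_j)_{j∈J} with σ_j ≤ α_j for all j satisfying σ_j ∧ α_i ≅ α_j ∧ σ_i for all k ∈ K and all i, j ∈ f⁻¹(k), one has α_j ∧ ⋁_{i∈f⁻¹(k)} σ_i ≅ σ_j for all k ∈ K and all j ∈ f⁻¹(k) (joins and meets computed in the relevant down-sets of X). -/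
open CategoryTheory Limits

universe u
universe u₁ v₁ u₂ v₂

attribute [local instance] CategoryTheory.ConcreteCategory.instFunLike

namespace Desc

variable (X : Type u) [Preorder X]

variable {X}

variable {X : Type u} [Preorder X]

variable (X : Type u) [Preorder X]

/-! ### Auxiliary machinery for the proof of `statement8` -/

section Statement8Aux

variable {X : Type u} [Preorder X]

theorem famHom_congr {A B : FamCat X} {g h : A ⟶ B} (e : g = h) (x : A.idx) :
    FamHom.toFun g x = FamHom.toFun h x := congrFun (congrArg FamHom.toFun e) x

theorem IsMeet.comm {y z m : X} (h : IsMeet y z m) : IsMeet z y m :=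
  ⟨h.2.1, h.1, fun u h1 h2 => h.2.2 u h2 h1⟩

section Pb

variable (hm : LocallyBinaryMeets X) {D A Z : FamCat X} (p : D ⟶ Z) (q : A ⟶ Z)

/-- Index set of the explicit pullback of `p` and `q` in `Fam X`. -/
def PbIdx : Type u :=
  {c : D.idx × A.idx // FamHom.toFun p c.1 = FamHom.toFun q c.2}

/-- Values of the explicit pullback: a chosen meet. -/
noncomputable def pbVal (c : PbIdx p q) : X :=
  (hm (Z.val (FamHom.toFun p c.1.1)) (D.val c.1.1) (A.val c.1.2) (FamHom.le p c.1.1)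
    ((FamHom.le q c.1.2).trans (le_of_eq (congrArg Z.val c.2.symm)))).choose

theorem pbVal_isMeet (c : PbIdx p q) :
    IsMeet (D.val c.1.1) (A.val c.1.2) (pbVal hm p q c) :=
  (hm (Z.val (FamHom.toFun p c.1.1)) (D.val c.1.1) (A.val c.1.2) (FamHom.le p c.1.1)
    ((FamHom.le q c.1.2).trans (le_of_eq (congrArg Z.val c.2.symm)))).choose_spec

/-- The explicit pullback object. -/
noncomputable def pbObj : FamCat X := ⟨PbIdx p q, pbVal hm p q⟩

/-- First projection from the explicit pullback. -/
def pbFst : pbObj hm p q ⟶ D :=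
  ⟨fun c => c.1.1, fun c => (pbVal_isMeet hm p q c).1⟩

/-- Second projection from the explicit pullback. -/
def pbSnd : pbObj hm p q ⟶ A :=
  ⟨fun c => c.1.2, fun c => (pbVal_isMeet hm p q c).2.1⟩

theorem pb_w : pbFst hm p q ≫ p = pbSnd hm p q ≫ q :=
  FamHom.ext (funext fun c => c.2)

/-- The explicit pullback cone. -/
noncomputable def pbCone : PullbackCone p q :=
  PullbackCone.mk (pbFst hm p q) (pbSnd hm p q) (pb_w hm p q)

/-- The explicit pullback cone is a limit. -/
noncomputable def pbIsLimit : IsLimit (pbCone hm p q) :=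
  PullbackCone.IsLimit.mk (pb_w hm p q)
    (fun s => ⟨fun d => ⟨(FamHom.toFun s.fst d, FamHom.toFun s.snd d),
        congrFun (congrArg FamHom.toFun s.condition) d⟩,
      fun d => (pbVal_isMeet hm p q _).2.2 _ (FamHom.le s.fst d) (FamHom.le s.snd d)⟩)
    (fun s => rfl) (fun s => rfl)
    (fun s m h1 h2 => FamHom.ext (funext fun d => Subtype.ext
      (Prod.ext (congrFun (congrArg FamHom.toFun h1) d)
        (congrFun (congrArg FamHom.toFun h2) d))))

/-- The explicit lift into the explicit pullback. -/
def pbLift {W : FamCat X} (h : W ⟶ D) (k : W ⟶ A) (hw : h ≫ p = k ≫ q) :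
    W ⟶ pbObj hm p q :=
  ⟨fun x => ⟨(FamHom.toFun h x, FamHom.toFun k x), famHom_congr hw x⟩,
   fun x => (pbVal_isMeet hm p q _).2.2 _ (FamHom.le h x) (FamHom.le k x)⟩

theorem pbLift_fst {W : FamCat X} (h : W ⟶ D) (k : W ⟶ A) (hw : h ≫ p = k ≫ q) :
    pbLift hm p q h k hw ≫ pbFst hm p q = h := rfl

theorem pbLift_snd {W : FamCat X} (h : W ⟶ D) (k : W ⟶ A) (hw : h ≫ p = k ≫ q) :
    pbLift hm p q h k hw ≫ pbSnd hm p q = k := rfl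

theorem pb_hom_ext {W : FamCat X} {w w' : W ⟶ pbObj hm p q}
    (h1 : w ≫ pbFst hm p q = w' ≫ pbFst hm p q)
    (h2 : w ≫ pbSnd hm p q = w' ≫ pbSnd hm p q) : w = w' :=
  FamHom.ext (funext fun x => Subtype.ext
    (Prod.ext (congrFun (congrArg FamHom.toFun h1) x)
      (congrFun (congrArg FamHom.toFun h2) x)))

variable [HasPullbacks (FamCat X)]

/-- Comparison of the explicit pullback with the chosen categorical one. -/
noncomputable def pbIso : pbObj hm p q ≅ pullback p q :=
  (limit.isoLimitCone ⟨pbCone hm p q, pbIsLimit hm p q⟩).symm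

theorem pbIso_hom_fst : (pbIso hm p q).hom ≫ pullback.fst p q = pbFst hm p q := by
  exact
    limit.isoLimitCone_inv_π ⟨pbCone hm p q, pbIsLimit hm p q⟩ WalkingCospan.left

theorem pbIso_hom_snd : (pbIso hm p q).hom ≫ pullback.snd p q = pbSnd hm p q := by
  exact
    limit.isoLimitCone_inv_π ⟨pbCone hm p q, pbIsLimit hm p q⟩ WalkingCospan.right

theorem pbIso_inv_fst : (pbIso hm p q).inv ≫ pbFst hm p q = pullback.fst p q := by
  rw [← pbIso_hom_fst hm p q, Iso.inv_hom_id_assoc]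

theorem pbIso_inv_snd : (pbIso hm p q).inv ≫ pbSnd hm p q = pullback.snd p q := by
  rw [← pbIso_hom_snd hm p q, Iso.inv_hom_id_assoc]

theorem lift_pbIso_inv {W : FamCat X} (h : W ⟶ D) (k : W ⟶ A) (hw : h ≫ p = k ≫ q) :
    pullback.lift h k hw ≫ (pbIso hm p q).inv = pbLift hm p q h k hw := by
  apply pb_hom_ext
  · rw [Category.assoc, pbIso_inv_fst, pullback.lift_fst, pbLift_fst]
  · rw [Category.assoc, pbIso_inv_snd, pullback.lift_snd, pbLift_snd]

theorem lift_pbIso_inv_assoc {W V : FamCat X} (h : W ⟶ D) (k : W ⟶ A)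
    (hw : h ≫ p = k ≫ q) (w : pbObj hm p q ⟶ V) :
    pullback.lift h k hw ≫ (pbIso hm p q).inv ≫ w = pbLift hm p q h k hw ≫ w := by
  rw [← Category.assoc, lift_pbIso_inv]

theorem pbLift_pbIso_hom {W : FamCat X} (h : W ⟶ D) (k : W ⟶ A) (hw : h ≫ p = k ≫ q) :
    pbLift hm p q h k hw ≫ (pbIso hm p q).hom = pullback.lift h k hw := by
  rw [← lift_pbIso_inv hm p q h k hw, Category.assoc, Iso.inv_hom_id, Category.comp_id]

theorem pbIso_hom_fst_apply (z : PbIdx p q) :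
    FamHom.toFun (pullback.fst p q) (FamHom.toFun (pbIso hm p q).hom z) = z.1.1 :=
  famHom_congr (pbIso_hom_fst hm p q) z

theorem pbIso_hom_snd_apply (z : PbIdx p q) :
    FamHom.toFun (pullback.snd p q) (FamHom.toFun (pbIso hm p q).hom z) = z.1.2 :=
  famHom_congr (pbIso_hom_snd hm p q) z

end Pb

section Reconstruct

variable {X : Type u} [Preorder X]

/-- Packaged data for reconstructing an object over `B` from descent data. -/
structure Recon {A B : FamCat X} (f : A ⟶ B) {C : FamCat X}
    (u : C ⟶ A) (Ξ : C.idx → A.idx → C.idx) : Type (u + 1) where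
  DF : FamCat X
  v : DF ⟶ B
  psi : ∀ (q : DF.idx) (j : A.idx), FamHom.toFun v q = FamHom.toFun f j → C.idx
  theta : C.idx → DF.idx
  hpsi_u : ∀ q j h, FamHom.toFun u (psi q j h) = j
  hpsi_le : ∀ q j h, ∀ w, w ≤ DF.val q → w ≤ A.val j → w ≤ C.val (psi q j h)
  htheta_v : ∀ c, FamHom.toFun v (theta c) = FamHom.toFun f (FamHom.toFun u c)
  htheta_le : ∀ c, C.val c ≤ DF.val (theta c)
  hpt : ∀ c h, psi (theta c) (FamHom.toFun u c) h = c
  htp : ∀ q j h, theta (psi q j h) = q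
  hXipsi : ∀ q j h j' h', Ξ (psi q j h) j' = psi q j' h'

variable {A B : FamCat X} {f : A ⟶ B} {C : FamCat X} {u : C ⟶ A}
  {Ξ : C.idx → A.idx → C.idx}

/-- The key inequality, powered by the condition in the statement. -/
theorem recon_le (hm : LocallyBinaryMeets X)
    (hu : ∀ c i, FamHom.toFun f i = FamHom.toFun f (FamHom.toFun u c) →
      FamHom.toFun u (Ξ c i) = i)
    (hassoc : ∀ c i i', FamHom.toFun f i = FamHom.toFun f (FamHom.toFun u c) →
      FamHom.toFun f i' = FamHom.toFun f (FamHom.toFun u c) → Ξ (Ξ c i) i' = Ξ c i')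
    (hle : ∀ c i, FamHom.toFun f i = FamHom.toFun f (FamHom.toFun u c) →
      ∀ w, w ≤ C.val c → w ≤ A.val i → w ≤ C.val (Ξ c i))
    (hcond : ∀ σ : A.idx → X, (∀ j, σ j ≤ A.val j) →
      (∀ i j, FamCat.app f i = FamCat.app f j → ∀ m m', IsMeet (σ j) (A.val i) m →
        IsMeet (A.val j) (σ i) m' → EquivLE m m') →
      ∀ j s, IsLocalJoin (B.val (FamCat.app f j))
          {x | ∃ i, FamCat.app f i = FamCat.app f j ∧ x = σ i} s →
        ∀ m, IsMeet (A.val j) s m → EquivLE m (σ j))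
    (c₀ : C.idx) (d : X)
    (hd : IsLocalJoin (B.val (FamHom.toFun f (FamHom.toFun u c₀)))
      {x | ∃ c', (FamHom.toFun f (FamHom.toFun u c') =
          FamHom.toFun f (FamHom.toFun u c₀) ∧ Ξ c₀ (FamHom.toFun u c') = c') ∧
        x = C.val c'} d)
    (j : A.idx) (hj : FamHom.toFun f j = FamHom.toFun f (FamHom.toFun u c₀))
    (w : X) (hw1 : w ≤ d) (hw2 : w ≤ A.val j) : w ≤ C.val (Ξ c₀ j) := by
  classical
  set σ' : A.idx → X := fun i =>
    if hi : FamHom.toFun f i = FamHom.toFun f (FamHom.toFun u c₀) then C.val (Ξ c₀ i)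
    else A.val i with hσ'
  have Fpos : ∀ i (hi : FamHom.toFun f i = FamHom.toFun f (FamHom.toFun u c₀)),
      σ' i = C.val (Ξ c₀ i) := fun i hi => dif_pos hi
  have Fneg : ∀ i, ¬(FamHom.toFun f i = FamHom.toFun f (FamHom.toFun u c₀)) →
      σ' i = A.val i := fun i hi => dif_neg hi
  have hΞα : ∀ c i (hi : FamHom.toFun f i = FamHom.toFun f (FamHom.toFun u c)),
      C.val (Ξ c i) ≤ A.val i := fun c i hi =>
    (FamHom.le u (Ξ c i)).trans (le_of_eq (congrArg A.val (hu c i hi)))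
  have hσle : ∀ i, σ' i ≤ A.val i := by
    intro i
    by_cases hi : FamHom.toFun f i = FamHom.toFun f (FamHom.toFun u c₀)
    · rw [Fpos i hi]; exact hΞα c₀ i hi
    · rw [Fneg i hi]
  have hcompat : ∀ i i₂, FamCat.app f i = FamCat.app f i₂ → ∀ m m',
      IsMeet (σ' i₂) (A.val i) m → IsMeet (A.val i₂) (σ' i) m' → EquivLE m m' := by
    intro i i₂ hii m m' hm1 hm2
    by_cases hi2 : FamHom.toFun f i₂ = FamHom.toFun f (FamHom.toFun u c₀)
    · have hi : FamHom.toFun f i = FamHom.toFun f (FamHom.toFun u c₀) := hii.trans hi2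
      rw [Fpos i₂ hi2] at hm1
      rw [Fpos i hi] at hm2
      have hii' : FamHom.toFun f i = FamHom.toFun f (FamHom.toFun u (Ξ c₀ i₂)) := by
        rw [hu c₀ i₂ hi2]; exact hii
      have hii'' : FamHom.toFun f i₂ = FamHom.toFun f (FamHom.toFun u (Ξ c₀ i)) := by
        rw [hu c₀ i hi]; exact hii.symm
      constructor
      · -- m ≤ m'
        refine hm2.2.2 m ((hm1.1).trans (hΞα c₀ i₂ hi2)) ?_
        have : m ≤ C.val (Ξ (Ξ c₀ i₂) i) :=
          hle (Ξ c₀ i₂) i hii' m hm1.1 hm1.2.1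
        rwa [hassoc c₀ i₂ i hi2 hi] at this
      · -- m' ≤ m
        refine hm1.2.2 m' ?_ ((hm2.2.1).trans (hΞα c₀ i hi))
        have : m' ≤ C.val (Ξ (Ξ c₀ i) i₂) :=
          hle (Ξ c₀ i) i₂ hii'' m' hm2.2.1 hm2.1
        rwa [hassoc c₀ i i₂ hi hi2] at this
    · have hi : ¬(FamHom.toFun f i = FamHom.toFun f (FamHom.toFun u c₀)) := fun hi =>
        hi2 (hii.symm.trans hi)
      rw [Fneg i₂ hi2] at hm1
      rw [Fneg i hi] at hm2
      exact ⟨hm2.2.2 m hm1.1 hm1.2.1, hm1.2.2 m' hm2.1 hm2.2.1⟩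
  have hdb : d ≤ B.val (FamHom.toFun f j) := hd.1.trans (le_of_eq (congrArg B.val hj.symm))
  have hjoin : IsLocalJoin (B.val (FamCat.app f j))
      {x | ∃ i, FamCat.app f i = FamCat.app f j ∧ x = σ' i} d := by
    refine ⟨hdb, ?_, ?_⟩
    · rintro x ⟨i, hij, rfl⟩
      have hi : FamHom.toFun f i = FamHom.toFun f (FamHom.toFun u c₀) := hij.trans hj
      rw [Fpos i hi]
      refine hd.2.1 _ ⟨Ξ c₀ i, ⟨?_, ?_⟩, rfl⟩
      · rw [hu c₀ i hi]; exact hi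
      · rw [hu c₀ i hi]
    · intro u' hu' hub
      refine hd.2.2 u' (hu'.trans (le_of_eq (congrArg B.val hj))) ?_
      rintro x ⟨c', ⟨h1, h2⟩, rfl⟩
      have : C.val c' ≤ σ' (FamHom.toFun u c') := by
        rw [Fpos _ h1, h2]
      exact this.trans (hub _ ⟨FamHom.toFun u c', h1.trans hj.symm, rfl⟩)
  obtain ⟨m₀, hm₀⟩ := hm (B.val (FamHom.toFun f j)) (A.val j) d (FamHom.le f j) hdb
  have := hcond σ' hσle hcompat j d hjoin m₀ hm₀
  have hwm : w ≤ m₀ := hm₀.2.2 w hw2 hw1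
  have := hwm.trans this.1
  rwa [Fpos j hj] at this

/-- The reconstruction of an object over `B` from descent data. -/
noncomputable def recon (hX : LocallyComplete X)
    (hu : ∀ c i, FamHom.toFun f i = FamHom.toFun f (FamHom.toFun u c) →
      FamHom.toFun u (Ξ c i) = i)
    (hunit : ∀ c, Ξ c (FamHom.toFun u c) = c)
    (hassoc : ∀ c i i', FamHom.toFun f i = FamHom.toFun f (FamHom.toFun u c) →
      FamHom.toFun f i' = FamHom.toFun f (FamHom.toFun u c) → Ξ (Ξ c i) i' = Ξ c i')
    (hle : ∀ c i, FamHom.toFun f i = FamHom.toFun f (FamHom.toFun u c) →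
      ∀ w, w ≤ C.val c → w ≤ A.val i → w ≤ C.val (Ξ c i))
    (hcond : ∀ σ : A.idx → X, (∀ j, σ j ≤ A.val j) →
      (∀ i j, FamCat.app f i = FamCat.app f j → ∀ m m', IsMeet (σ j) (A.val i) m →
        IsMeet (A.val j) (σ i) m' → EquivLE m m') →
      ∀ j s, IsLocalJoin (B.val (FamCat.app f j))
          {x | ∃ i, FamCat.app f i = FamCat.app f j ∧ x = σ i} s →
        ∀ m, IsMeet (A.val j) s m → EquivLE m (σ j)) :
    Recon f u Ξ :=
  let r : C.idx → C.idx → Prop := fun c c' =>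
    FamHom.toFun f (FamHom.toFun u c') = FamHom.toFun f (FamHom.toFun u c) ∧
      Ξ c (FamHom.toFun u c') = c'
  have hrefl : ∀ c, r c c := fun c => ⟨rfl, hunit c⟩
  have hsymm : ∀ {c c'}, r c c' → r c' c := fun {c c'} h =>
    ⟨h.1.symm, by
      have e := h.2
      calc Ξ c' (FamHom.toFun u c)
          = Ξ (Ξ c (FamHom.toFun u c')) (FamHom.toFun u c) := by rw [e]
        _ = Ξ c (FamHom.toFun u c) := hassoc c _ _ h.1 rfl
        _ = c := hunit c⟩
  have htrans : ∀ {c c' c''}, r c c' → r c' c'' → r c c'' := fun {c c' c''} h1 h2 =>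
    ⟨h2.1.trans h1.1, by
      have e1 := h1.2
      have e2 := h2.2
      calc Ξ c (FamHom.toFun u c'')
          = Ξ (Ξ c (FamHom.toFun u c')) (FamHom.toFun u c'') := by
            rw [(hassoc c _ _ h1.1 (h2.1.trans h1.1))]
        _ = Ξ c' (FamHom.toFun u c'') := by rw [e1]
        _ = c'' := e2⟩
  let s : Setoid C.idx := ⟨r, ⟨hrefl, hsymm, htrans⟩⟩
  let kq : Quotient s → B.idx :=
    Quotient.lift (fun c => FamHom.toFun f (FamHom.toFun u c)) (fun c c' h => h.1.symm)
  have hSbound : ∀ q : Quotient s,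
      ∀ x ∈ {x | ∃ c, Quotient.mk s c = q ∧ x = C.val c}, x ≤ B.val (kq q) := by
    rintro q x ⟨c, hc, rfl⟩
    subst hc
    exact (FamHom.le u c).trans (FamHom.le f (FamHom.toFun u c))
  let δ : Quotient s → X := fun q =>
    (hX (B.val (kq q)) {x | ∃ c, Quotient.mk s c = q ∧ x = C.val c} (hSbound q)).choose
  have hδ : ∀ q, IsLocalJoin (B.val (kq q))
      {x | ∃ c, Quotient.mk s c = q ∧ x = C.val c} (δ q) := fun q =>
    (hX (B.val (kq q)) {x | ∃ c, Quotient.mk s c = q ∧ x = C.val c} (hSbound q)).choose_spec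
  have hout : ∀ q : Quotient s, kq q = FamHom.toFun f (FamHom.toFun u q.out) :=
    fun q => (congrArg kq q.out_eq).symm
  have hfj : ∀ (q : Quotient s) (j : A.idx), kq q = FamHom.toFun f j →
      FamHom.toFun f j = FamHom.toFun f (FamHom.toFun u q.out) :=
    fun q j h => h.symm.trans (hout q)
  have hmk : ∀ c i (hi : FamHom.toFun f i = FamHom.toFun f (FamHom.toFun u c)),
      Quotient.mk s (Ξ c i) = Quotient.mk s c := by
    intro c i hi
    refine (Quotient.sound ?_).symm
    refine ⟨?_, ?_⟩
    · rw [hu c i hi]; exact hi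
    · rw [hu c i hi]
  { DF := ⟨Quotient s, δ⟩
    v := ⟨kq, fun q => (hδ q).1⟩
    psi := fun q j _ => Ξ q.out j
    theta := fun c => Quotient.mk s c
    hpsi_u := fun q j h => hu q.out j (hfj q j h)
    hpsi_le := by
      intro q j h w hw1 hw2
      refine recon_le hX.meets hu hassoc hle hcond q.out (δ q) ?_ j (hfj q j h) w hw1 hw2
      have hset : {x | ∃ c, Quotient.mk s c = q ∧ x = C.val c} =
          {x | ∃ c', (FamHom.toFun f (FamHom.toFun u c') =
              FamHom.toFun f (FamHom.toFun u q.out) ∧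
            Ξ q.out (FamHom.toFun u c') = c') ∧ x = C.val c'} := by
        ext x
        constructor
        · rintro ⟨c, hc, rfl⟩
          exact ⟨c, Quotient.exact (q.out_eq.trans hc.symm), rfl⟩
        · rintro ⟨c', hr, rfl⟩
          exact ⟨c', (Quotient.sound hr).symm.trans q.out_eq, rfl⟩
      have hd := hδ q
      rw [hset, hout q] at hd
      exact hd
    htheta_v := fun c => rfl
    htheta_le := fun c => (hδ (Quotient.mk s c)).2.1 _ ⟨c, rfl, rfl⟩
    hpt := by
      intro c h
      exact (Quotient.exact (Quotient.out_eq (Quotient.mk s c))).2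
    htp := by
      intro q j h
      exact (hmk q.out j (hfj q j h)).trans q.out_eq
    hXipsi := fun q j h j' h' => hassoc q.out j j' (hfj q j h) (hfj q j' h') }

end Reconstruct

section DescentA

variable {X : Type u} [Preorder X] {A B : FamCat X}

/-- The family `(σ_j)` as an object of `Fam X`. -/
def sigmaObj (σ : A.idx → X) : FamCat X := ⟨A.idx, σ⟩

/-- The map `(σ_j) ⟶ (α_j)` over the identity. -/
def sigmaHom (σ : A.idx → X) (hle : ∀ j, σ j ≤ A.val j) : sigmaObj (A := A) σ ⟶ A :=
  ⟨fun i => i, hle⟩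

variable [HasPullbacks (FamCat X)] (hm : LocallyBinaryMeets X) (f : A ⟶ B)
  (σ : A.idx → X) (hle : ∀ j, σ j ≤ A.val j)

/-- The object of `Over A` determined by a family `(σ_j) ≤ (α_j)`. -/
def sigmaOver : Over A := Over.mk (sigmaHom σ hle)

theorem sigmaY_hom_toFun (c : A.idx) :
    FamHom.toFun ((Over.map f).obj (sigmaOver σ hle)).hom c = FamHom.toFun f c := rfl

/-- The structure map of the descent-datum algebra, at the level of explicit pullbacks. -/
def sigmaXi
    (hcompat : ∀ i j : A.idx, FamCat.app f i = FamCat.app f j →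
      ∀ m m' : X, IsMeet (σ j) (A.val i) m → IsMeet (A.val j) (σ i) m' → EquivLE m m') :
    pbObj hm ((Over.map f).obj (sigmaOver σ hle)).hom f ⟶ sigmaObj (A := A) σ := by
  refine ⟨fun z => z.1.2, ?_⟩
  intro z
  have h1 : IsMeet (σ z.1.1) (A.val z.1.2)
      (pbVal hm ((Over.map f).obj (sigmaOver σ hle)).hom f z) :=
    pbVal_isMeet hm _ f z
  have hzz : FamHom.toFun f z.1.1 = FamHom.toFun f z.1.2 :=
    (sigmaY_hom_toFun f σ hle z.1.1).symm.trans z.2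
  obtain ⟨m', hm'⟩ := hm (B.val (FamHom.toFun f z.1.1)) (A.val z.1.1) (σ z.1.2)
    (FamHom.le f z.1.1)
    ((hle z.1.2).trans ((FamHom.le f z.1.2).trans (le_of_eq (congrArg B.val hzz.symm))))
  exact ((hcompat z.1.2 z.1.1 hzz.symm _ m' h1 hm').1).trans hm'.2.1

/-- The structure map of the descent-datum algebra. -/
noncomputable def sigmaA
    (hcompat : ∀ i j : A.idx, FamCat.app f i = FamCat.app f j →
      ∀ m m' : X, IsMeet (σ j) (A.val i) m → IsMeet (A.val j) (σ i) m' → EquivLE m m') :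
    (Over.pullback f).obj ((Over.map f).obj (sigmaOver σ hle)) ⟶ sigmaOver σ hle :=
  Over.homMk
    ((pbIso hm ((Over.map f).obj (sigmaOver σ hle)).hom f).inv ≫ sigmaXi hm f σ hle hcompat)
    (by
      have h2 : sigmaXi hm f σ hle hcompat ≫ sigmaHom σ hle =
          pbSnd hm ((Over.map f).obj (sigmaOver σ hle)).hom f := FamHom.ext rfl
      show ((pbIso hm ((Over.map f).obj (sigmaOver σ hle)).hom f).inv ≫
          sigmaXi hm f σ hle hcompat) ≫ sigmaHom σ hle = _
      rw [Category.assoc, h2, pbIso_inv_snd]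
      rfl)

/-- The descent-datum algebra. -/
noncomputable def sigmaAlg
    (hcompat : ∀ i j : A.idx, FamCat.app f i = FamCat.app f j →
      ∀ m m' : X, IsMeet (σ j) (A.val i) m → IsMeet (A.val j) (σ i) m' → EquivLE m m') :
    (Over.mapPullbackAdj f).toMonad.Algebra where
  A := sigmaOver σ hle
  a := sigmaA hm f σ hle hcompat
  unit := by
    apply Over.OverMorphism.ext
    have e : ((Over.mapPullbackAdj f).unit.app (sigmaOver σ hle)).left ≫
        pullback.snd ((Over.map f).obj (sigmaOver σ hle)).hom f = (sigmaOver σ hle).hom := by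
      rw [Over.mapPullbackAdj_unit_app]
      exact pullback.lift_snd _ _ _
    apply FamHom.ext
    funext x
    show (FamHom.toFun (pbIso hm ((Over.map f).obj (sigmaOver σ hle)).hom f).inv
        (FamHom.toFun ((Over.mapPullbackAdj f).unit.app (sigmaOver σ hle)).left x)).1.2 = x
    have h1 := famHom_congr
      (pbIso_inv_snd hm ((Over.map f).obj (sigmaOver σ hle)).hom f)
      (FamHom.toFun ((Over.mapPullbackAdj f).unit.app (sigmaOver σ hle)).left x)
    exact h1.trans (famHom_congr e x)
  assoc := by
    apply Over.OverMorphism.ext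
    have e2 : ((Over.pullback f).map
        ((Over.mapPullbackAdj f).counit.app ((Over.map f).obj (sigmaOver σ hle)))).left ≫
        pullback.snd ((Over.map f).obj (sigmaOver σ hle)).hom f =
        pullback.snd
          ((Over.pullback f ⋙ Over.map f).obj ((Over.map f).obj (sigmaOver σ hle))).hom f := by
      exact pullback.lift_snd _ _ _
    have e3 : ((Over.pullback f).map ((Over.map f).map (sigmaA hm f σ hle hcompat))).left ≫
        pullback.snd ((Over.map f).obj (sigmaOver σ hle)).hom f =
        pullback.snd
          ((Over.map f).obj ((Over.pullback f).obj ((Over.map f).obj (sigmaOver σ hle)))).hom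
          f := by
      exact pullback.lift_snd _ _ _
    apply FamHom.ext
    funext w0
    show (FamHom.toFun (pbIso hm ((Over.map f).obj (sigmaOver σ hle)).hom f).inv
        (FamHom.toFun ((Over.pullback f).map
          ((Over.mapPullbackAdj f).counit.app ((Over.map f).obj (sigmaOver σ hle)))).left
          w0)).1.2 =
      (FamHom.toFun (pbIso hm ((Over.map f).obj (sigmaOver σ hle)).hom f).inv
        (FamHom.toFun
          ((Over.pullback f).map ((Over.map f).map (sigmaA hm f σ hle hcompat))).left w0)).1.2
    have h1 := famHom_congr
      (pbIso_inv_snd hm ((Over.map f).obj (sigmaOver σ hle)).hom f)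
      (FamHom.toFun ((Over.pullback f).map
        ((Over.mapPullbackAdj f).counit.app ((Over.map f).obj (sigmaOver σ hle)))).left w0)
    have h2 := famHom_congr
      (pbIso_inv_snd hm ((Over.map f).obj (sigmaOver σ hle)).hom f)
      (FamHom.toFun
        ((Over.pullback f).map ((Over.map f).map (sigmaA hm f σ hle hcompat))).left w0)
    exact h1.trans ((famHom_congr (e2.trans e3.symm) w0).trans h2.symm)

/-- Essential surjectivity of the comparison functor forces the join condition. -/
theorem cond_of_essSurj
    (hE : (Monad.comparison (Over.mapPullbackAdj f)).EssSurj)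
    (hmB : LocallyBinaryMeets X) (hleB : ∀ j, σ j ≤ A.val j)
    (hcompat : ∀ i j : A.idx, FamCat.app f i = FamCat.app f j →
      ∀ m m' : X, IsMeet (σ j) (A.val i) m → IsMeet (A.val j) (σ i) m' → EquivLE m m')
    (j : A.idx) (s : X)
    (hs : IsLocalJoin (B.val (FamCat.app f j))
      {x | ∃ i : A.idx, FamCat.app f i = FamCat.app f j ∧ x = σ i} s)
    (m : X) (hmt : IsMeet (A.val j) s m) : EquivLE m (σ j) := by
  classical
  obtain ⟨D, ⟨hiso⟩⟩ := hE.mem_essImage (sigmaAlg hmB f σ hleB hcompat)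
  have hA : (Over.pullback f).obj D ≅ sigmaOver σ hleB :=
    ((Over.mapPullbackAdj f).toMonad.forget).mapIso hiso
  let ψ : pbObj hmB D.hom f ⟶ sigmaObj (A := A) σ := (pbIso hmB D.hom f).hom ≫ hA.hom.left
  let χ : sigmaObj (A := A) σ ⟶ pbObj hmB D.hom f := hA.inv.left ≫ (pbIso hmB D.hom f).inv
  have hψu : ψ ≫ sigmaHom σ hleB = pbSnd hmB D.hom f := by
    show (pbIso hmB D.hom f).hom ≫ hA.hom.left ≫ (sigmaOver σ hleB).hom = _
    rw [Over.w hA.hom]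
    show (pbIso hmB D.hom f).hom ≫ pullback.snd D.hom f = _
    exact pbIso_hom_snd hmB D.hom f
  have hψ2 : ∀ z : PbIdx D.hom f, FamHom.toFun ψ z = z.1.2 := fun z => famHom_congr hψu z
  have hχu : χ ≫ pbSnd hmB D.hom f = sigmaHom σ hleB := by
    show hA.inv.left ≫ (pbIso hmB D.hom f).inv ≫ pbSnd hmB D.hom f = _
    rw [pbIso_inv_snd]
    exact Over.w hA.inv
  have hχ2 : ∀ i : A.idx, (FamHom.toFun χ i).1.2 = i := fun i => famHom_congr hχu i
  have hψχ : ψ ≫ χ = 𝟙 (pbObj hmB D.hom f) := by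
    show (pbIso hmB D.hom f).hom ≫ (hA.hom.left ≫ hA.inv.left) ≫ (pbIso hmB D.hom f).inv = _
    have h2 : hA.hom.left ≫ hA.inv.left = 𝟙 (pullback D.hom f) := by
      rw [← Over.comp_left, hA.hom_inv_id]
      rfl
    rw [h2, Category.id_comp, Iso.hom_inv_id]
  have hχψ2 : ∀ z : PbIdx D.hom f, FamHom.toFun χ (FamHom.toFun ψ z) = z := fun z =>
    famHom_congr hψχ z
  -- the map `j ↦ d_j`
  have hd1 : ∀ i : A.idx, FamHom.toFun D.hom ((FamHom.toFun χ i).1.1) = FamHom.toFun f i :=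
    fun i => ((FamHom.toFun χ i).2).trans (congrArg (FamHom.toFun f) (hχ2 i))
  have huniq : ∀ z : PbIdx D.hom f, (FamHom.toFun χ z.1.2).1.1 = z.1.1 := by
    intro z
    have h3 := hχψ2 z
    rw [hψ2 z] at h3
    exact congrArg (fun t => t.1.1) h3
  have hψle : ∀ z : PbIdx D.hom f, pbVal hmB D.hom f z ≤ σ z.1.2 := by
    intro z
    have h4 := FamHom.le ψ z
    rwa [hψ2 z] at h4
  constructor
  · -- m ≤ σ j
    have hbound : ∀ x ∈ {x | ∃ i, FamCat.app f i = FamCat.app f j ∧ x = σ i},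
        x ≤ D.left.val ((FamHom.toFun χ j).1.1) := by
      rintro x ⟨i, hi, rfl⟩
      have hz : FamHom.toFun D.hom ((FamHom.toFun χ j).1.1) = FamHom.toFun f i :=
        (hd1 j).trans hi.symm
      have h5 : (FamHom.toFun χ i).1.1 = ((FamHom.toFun χ j).1.1) :=
        huniq ⟨((FamHom.toFun χ j).1.1, i), hz⟩
      calc σ i ≤ pbVal hmB D.hom f (FamHom.toFun χ i) := FamHom.le χ i
        _ ≤ D.left.val ((FamHom.toFun χ i).1.1) := (pbVal_isMeet hmB D.hom f _).1
        _ ≤ D.left.val ((FamHom.toFun χ j).1.1) := le_of_eq (congrArg D.left.val h5)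
    have hDb : D.left.val ((FamHom.toFun χ j).1.1) ≤ B.val (FamCat.app f j) :=
      (FamHom.le D.hom _).trans (le_of_eq (congrArg B.val (hd1 j)))
    have hsd : s ≤ D.left.val ((FamHom.toFun χ j).1.1) := hs.2.2 _ hDb hbound
    have hmd : m ≤ pbVal hmB D.hom f ⟨(((FamHom.toFun χ j).1.1), j), hd1 j⟩ :=
      (pbVal_isMeet hmB D.hom f _).2.2 m (hmt.2.1.trans hsd) hmt.1
    exact hmd.trans (hψle ⟨(((FamHom.toFun χ j).1.1), j), hd1 j⟩)
  · exact hmt.2.2 (σ j) (hleB j) (hs.2.1 (σ j) ⟨j, rfl, rfl⟩)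

end DescentA

section DescentB

variable {X : Type u} [Preorder X] {A B : FamCat X}

theorem essSurj_of_cond [HasPullbacks (FamCat X)] (hX : LocallyComplete X) (f : A ⟶ B)
    (hcond : ∀ σ : A.idx → X, (∀ j, σ j ≤ A.val j) →
      (∀ i j, FamCat.app f i = FamCat.app f j → ∀ m m', IsMeet (σ j) (A.val i) m →
        IsMeet (A.val j) (σ i) m' → EquivLE m m') →
      ∀ j s, IsLocalJoin (B.val (FamCat.app f j))
          {x | ∃ i, FamCat.app f i = FamCat.app f j ∧ x = σ i} s →
        ∀ m, IsMeet (A.val j) s m → EquivLE m (σ j)) :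
    (Monad.comparison (Over.mapPullbackAdj f)).EssSurj := by
  classical
  have hm : LocallyBinaryMeets X := hX.meets
  constructor
  intro M
  -- Notation: `C = M.A.left`, `u = M.A.hom`, `P` the projection of the free object.
  let P : ((Over.map f).obj M.A).left ⟶ B := ((Over.map f).obj M.A).hom
  have hYt : ∀ c, FamHom.toFun P c = FamHom.toFun f (FamHom.toFun M.A.hom c) := fun _ => rfl
  -- the structure map, transported to the explicit pullback
  let θ : pbObj hm P f ⟶ M.A.left := (pbIso hm P f).hom ≫ M.a.left
  have hθu_mor : θ ≫ M.A.hom = pbSnd hm P f := by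
    show (pbIso hm P f).hom ≫ M.a.left ≫ M.A.hom = _
    exact (congrArg (fun k => (pbIso hm P f).hom ≫ k) (Over.w M.a)).trans (pbIso_hom_snd hm P f)
  have hθle : ∀ z : PbIdx P f, pbVal hm P f z ≤ M.A.left.val (FamHom.toFun θ z) := fun z =>
    FamHom.le θ z
  -- unit law, pointwise
  have hw0 : 𝟙 M.A.left ≫ P = M.A.hom ≫ f := by
    rw [Category.id_comp]
    exact Over.map_obj_hom
  have hθunit : ∀ c, FamHom.toFun θ
      ⟨(c, FamHom.toFun M.A.hom c), hYt c⟩ = c := by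
    intro c
    have eU := Over.mapPullbackAdj_unit_app f M.A
    have s1 : FamHom.toFun (pbIso hm P f).hom
        (⟨(c, FamHom.toFun M.A.hom c), hYt c⟩ : PbIdx P f) =
        FamHom.toFun ((Over.mapPullbackAdj f).unit.app M.A).left c :=
      (famHom_congr (pbLift_pbIso_hom hm P f (𝟙 M.A.left) M.A.hom hw0) c).trans
        (famHom_congr (congrArg CommaMorphism.left eU) c).symm
    show FamHom.toFun M.a.left (FamHom.toFun (pbIso hm P f).hom _) = c
    rw [s1]
    exact famHom_congr (congrArg CommaMorphism.left M.unit) c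
  -- associativity law, pointwise
  have hinvhom : ∀ y, FamHom.toFun (pbIso hm P f).hom (FamHom.toFun (pbIso hm P f).inv y) = y :=
    fun y => famHom_congr (pbIso hm P f).inv_hom_id y
  have hcore : ∀ (z : PbIdx P f) (i' : A.idx)
      (h' : FamHom.toFun f i' = FamHom.toFun f z.1.2),
      FamHom.toFun θ ⟨(z.1.1, i'), z.2.trans h'.symm⟩ =
      FamHom.toFun θ ⟨(FamHom.toFun θ z, i'),
        (hYt _).trans ((congrArg (FamHom.toFun f) (famHom_congr hθu_mor z)).trans h'.symm)⟩ := by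
    intro z i' h'
    -- the element of the double pullback corresponding to `(z, i')`
    have hcondz : FamHom.toFun
        ((Over.pullback f ⋙ Over.map f).obj ((Over.map f).obj M.A)).hom
        (FamHom.toFun (pbIso hm P f).hom z) = FamHom.toFun f i' :=
      (congrArg (FamHom.toFun f) (pbIso_hom_snd_apply hm P f z)).trans h'.symm
    let z' : PbIdx ((Over.pullback f ⋙ Over.map f).obj ((Over.map f).obj M.A)).hom f :=
      ⟨(FamHom.toFun (pbIso hm P f).hom z, i'), hcondz⟩
    let w0 := FamHom.toFun
      (pbIso hm ((Over.pullback f ⋙ Over.map f).obj ((Over.map f).obj M.A)).hom f).hom z'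
    let μleft := ((Over.pullback f).map
      ((Over.mapPullbackAdj f).counit.app ((Over.map f).obj M.A))).left
    let Tal := ((Over.pullback f).map ((Over.map f).map M.a)).left
    -- counit left component
    have eC := Over.mapPullbackAdj_counit_app f ((Over.map f).obj M.A)
    -- morphism-level component computations
    have e8 : μleft ≫ pullback.fst P f =
        pullback.fst ((Over.pullback f ⋙ Over.map f).obj ((Over.map f).obj M.A)).hom f ≫
          ((Over.mapPullbackAdj f).counit.app ((Over.map f).obj M.A)).left := by
      show ((Over.pullback f).map
        ((Over.mapPullbackAdj f).counit.app ((Over.map f).obj M.A))).left ≫ _ = _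
      exact pullback.lift_fst _ _ _
    have e2 : μleft ≫ pullback.snd P f =
        pullback.snd ((Over.pullback f ⋙ Over.map f).obj ((Over.map f).obj M.A)).hom f := by
      show ((Over.pullback f).map
        ((Over.mapPullbackAdj f).counit.app ((Over.map f).obj M.A))).left ≫ _ = _
      exact pullback.lift_snd _ _ _
    have e10 : Tal ≫ pullback.fst P f =
        pullback.fst ((Over.map f).obj ((Over.mapPullbackAdj f).toMonad.obj M.A)).hom f ≫
          M.a.left := by
      show ((Over.pullback f).map ((Over.map f).map M.a)).left ≫ _ = _
      exact pullback.lift_fst _ _ _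
    have e11 : Tal ≫ pullback.snd P f =
        pullback.snd ((Over.map f).obj ((Over.mapPullbackAdj f).toMonad.obj M.A)).hom f := by
      show ((Over.pullback f).map ((Over.map f).map M.a)).left ≫ _ = _
      exact pullback.lift_snd _ _ _
    -- components of the two transported elements
    have ha1 : (FamHom.toFun (pbIso hm P f).inv (FamHom.toFun μleft w0)).1.1 = z.1.1 := by
      have t1 := famHom_congr (pbIso_inv_fst hm P f) (FamHom.toFun μleft w0)
      have t2 := famHom_congr e8 w0
      have t3 := congrArg (FamHom.toFun ((Over.mapPullbackAdj f).counit.app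
        ((Over.map f).obj M.A)).left)
        (pbIso_hom_fst_apply hm
          ((Over.pullback f ⋙ Over.map f).obj ((Over.map f).obj M.A)).hom f z')
      have t4 := famHom_congr (congrArg CommaMorphism.left eC)
        (FamHom.toFun (pbIso hm P f).hom z)
      have t5 := pbIso_hom_fst_apply hm P f z
      exact t1.trans (t2.trans (t3.trans (t4.trans t5)))
    have ha2 : (FamHom.toFun (pbIso hm P f).inv (FamHom.toFun μleft w0)).1.2 = i' := by
      have t1 := famHom_congr (pbIso_inv_snd hm P f) (FamHom.toFun μleft w0)
      have t2 := famHom_congr e2 w0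
      have t3 := pbIso_hom_snd_apply hm
        ((Over.pullback f ⋙ Over.map f).obj ((Over.map f).obj M.A)).hom f z'
      exact t1.trans (t2.trans t3)
    have hb1 : (FamHom.toFun (pbIso hm P f).inv (FamHom.toFun Tal w0)).1.1 =
        FamHom.toFun θ z := by
      have t1 := famHom_congr (pbIso_inv_fst hm P f) (FamHom.toFun Tal w0)
      have t2 := famHom_congr e10 w0
      have t3 := congrArg (FamHom.toFun M.a.left)
        (pbIso_hom_fst_apply hm
          ((Over.pullback f ⋙ Over.map f).obj ((Over.map f).obj M.A)).hom f z')
      exact t1.trans (t2.trans t3)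
    have hb2 : (FamHom.toFun (pbIso hm P f).inv (FamHom.toFun Tal w0)).1.2 = i' := by
      have t1 := famHom_congr (pbIso_inv_snd hm P f) (FamHom.toFun Tal w0)
      have t2 := famHom_congr e11 w0
      have t3 := pbIso_hom_snd_apply hm
        ((Over.pullback f ⋙ Over.map f).obj ((Over.map f).obj M.A)).hom f z'
      exact t1.trans (t2.trans t3)
    -- assemble
    have assocpt := famHom_congr (congrArg CommaMorphism.left M.assoc) w0
    -- assocpt : M.a.left (μleft w0) = M.a.left (Tal w0)  (up to defeq)
    calc FamHom.toFun θ ⟨(z.1.1, i'), z.2.trans h'.symm⟩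
        = FamHom.toFun θ (FamHom.toFun (pbIso hm P f).inv (FamHom.toFun μleft w0)) := by
          refine congrArg (FamHom.toFun θ) (Subtype.ext (Prod.ext ha1.symm ha2.symm))
      _ = FamHom.toFun M.a.left (FamHom.toFun μleft w0) :=
          congrArg (FamHom.toFun M.a.left) (hinvhom (FamHom.toFun μleft w0))
      _ = FamHom.toFun M.a.left (FamHom.toFun Tal w0) := assocpt
      _ = FamHom.toFun θ (FamHom.toFun (pbIso hm P f).inv (FamHom.toFun Tal w0)) :=
          (congrArg (FamHom.toFun M.a.left) (hinvhom (FamHom.toFun Tal w0))).symm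
      _ = FamHom.toFun θ ⟨(FamHom.toFun θ z, i'), _⟩ :=
          congrArg (FamHom.toFun θ) (Subtype.ext (Prod.ext hb1 hb2))
  -- the total operation Ξ
  let Ξ : M.A.left.idx → A.idx → M.A.left.idx := fun c i =>
    if h : FamHom.toFun f i = FamHom.toFun f (FamHom.toFun M.A.hom c) then
      FamHom.toFun θ ⟨(c, i), (hYt c).trans h.symm⟩
    else c
  have hΞdef : ∀ c i (h : FamHom.toFun f i = FamHom.toFun f (FamHom.toFun M.A.hom c)),
      Ξ c i = FamHom.toFun θ ⟨(c, i), (hYt c).trans h.symm⟩ := fun c i h => dif_pos h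
  have hu : ∀ c i, FamHom.toFun f i = FamHom.toFun f (FamHom.toFun M.A.hom c) →
      FamHom.toFun M.A.hom (Ξ c i) = i := by
    intro c i h
    rw [hΞdef c i h]
    exact famHom_congr hθu_mor ⟨(c, i), (hYt c).trans h.symm⟩
  have hunit' : ∀ c, Ξ c (FamHom.toFun M.A.hom c) = c := by
    intro c
    rw [hΞdef c (FamHom.toFun M.A.hom c) rfl]
    exact hθunit c
  have hassoc' : ∀ c i i', FamHom.toFun f i = FamHom.toFun f (FamHom.toFun M.A.hom c) →
      FamHom.toFun f i' = FamHom.toFun f (FamHom.toFun M.A.hom c) →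
      Ξ (Ξ c i) i' = Ξ c i' := by
    intro c i i' hi hi'
    have h1 : FamHom.toFun f i' = FamHom.toFun f (FamHom.toFun M.A.hom (Ξ c i)) := by
      rw [hu c i hi]
      exact hi'.trans hi.symm
    rw [hΞdef (Ξ c i) i' h1, hΞdef c i' hi']
    have h2 := hcore ⟨(c, i), (hYt c).trans hi.symm⟩ i' (hi'.trans hi.symm)
    have θcong : ∀ (a b : PbIdx P f), a.1 = b.1 →
        FamHom.toFun θ a = FamHom.toFun θ b := fun a b h =>
      congrArg (FamHom.toFun θ) (Subtype.ext h)
    simp only [hΞdef c i hi]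
    exact h2.symm
  have hle' : ∀ c i, FamHom.toFun f i = FamHom.toFun f (FamHom.toFun M.A.hom c) →
      ∀ w, w ≤ M.A.left.val c → w ≤ A.val i → w ≤ M.A.left.val (Ξ c i) := by
    intro c i h w hw1 hw2
    rw [hΞdef c i h]
    refine le_trans ?_ (hθle ⟨(c, i), (hYt c).trans h.symm⟩)
    exact (pbVal_isMeet hm P f _).2.2 w hw1 hw2
  -- reconstruct the object over B
  have R : Recon f M.A.hom Ξ := recon hX hu hunit' hassoc' hle' hcond
  -- the morphisms between the explicit pullback of `R.v` and `M.A.left`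
  let Ψ : pbObj hm R.v f ⟶ M.A.left :=
    ⟨fun z => R.psi z.1.1 z.1.2 z.2, fun z => R.hpsi_le z.1.1 z.1.2 z.2 _
      (pbVal_isMeet hm R.v f z).1 (pbVal_isMeet hm R.v f z).2.1⟩
  let Θ : M.A.left ⟶ pbObj hm R.v f :=
    ⟨fun c => ⟨(R.theta c, FamHom.toFun M.A.hom c), R.htheta_v c⟩,
      fun c => (pbVal_isMeet hm R.v f _).2.2 _ (R.htheta_le c) (FamHom.le M.A.hom c)⟩
  have hΨΘ : Ψ ≫ Θ = 𝟙 (pbObj hm R.v f) :=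
    FamHom.ext (funext fun z => Subtype.ext
      (Prod.ext (R.htp z.1.1 z.1.2 z.2) (R.hpsi_u z.1.1 z.1.2 z.2)))
  have hΘΨ : Θ ≫ Ψ = 𝟙 M.A.left :=
    FamHom.ext (funext fun c => R.hpt c (R.htheta_v c))
  have hΨu : Ψ ≫ M.A.hom = pbSnd hm R.v f :=
    FamHom.ext (funext fun z => R.hpsi_u z.1.1 z.1.2 z.2)
  -- the iso in `Over A`
  refine ⟨Over.mk R.v, ⟨Monad.Algebra.isoMk (Over.isoMk
    ((pbIso hm R.v f).symm ≪≫ ⟨Ψ, Θ, hΨΘ, hΘΨ⟩) ?_) ?_⟩⟩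
  · -- over-condition
    show ((pbIso hm R.v f).inv ≫ Ψ) ≫ M.A.hom = ((Over.pullback f).obj (Over.mk R.v)).hom
    rw [Category.assoc, hΨu, pbIso_inv_snd]
    rfl
  · -- algebra compatibility
    apply Over.OverMorphism.ext
    apply FamHom.ext
    funext w1
    -- abbreviations
    let invD := (pbIso hm R.v f).inv
    let aK := ((Over.pullback f).map
      ((Over.mapPullbackAdj f).counit.app (Over.mk R.v))).left
    let hh : (Over.pullback f).obj (Over.mk R.v) ⟶ M.A := Over.homMk
      ((pbIso hm R.v f).inv ≫ Ψ)
      (by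
        show ((pbIso hm R.v f).inv ≫ Ψ) ≫ M.A.hom = ((Over.pullback f).obj (Over.mk R.v)).hom
        rw [Category.assoc, hΨu, pbIso_inv_snd]
        rfl)
    let Tel := ((Over.pullback f).map ((Over.map f).map hh)).left
    show FamHom.toFun M.a.left (FamHom.toFun Tel w1) =
      FamHom.toFun Ψ (FamHom.toFun invD (FamHom.toFun aK w1))
    -- morphism-level computations
    have eT1 : Tel ≫ pullback.fst ((Over.map f).obj M.A).hom f =
        pullback.fst ((Over.pullback f ⋙ Over.map f).obj (Over.mk R.v)).hom f ≫
          ((pbIso hm R.v f).inv ≫ Ψ) := by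
      show ((Over.pullback f).map ((Over.map f).map hh)).left ≫ _ = _
      exact pullback.lift_fst _ _ _
    have eT2 : Tel ≫ pullback.snd ((Over.map f).obj M.A).hom f =
        pullback.snd ((Over.pullback f ⋙ Over.map f).obj (Over.mk R.v)).hom f := by
      show ((Over.pullback f).map ((Over.map f).map hh)).left ≫ _ = _
      exact pullback.lift_snd _ _ _
    have eA1 : aK ≫ pullback.fst (Over.mk R.v).hom f =
        pullback.fst ((Over.pullback f ⋙ Over.map f).obj (Over.mk R.v)).hom f ≫
          ((Over.mapPullbackAdj f).counit.app (Over.mk R.v)).left := by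
      show ((Over.pullback f).map
        ((Over.mapPullbackAdj f).counit.app (Over.mk R.v))).left ≫ _ = _
      exact pullback.lift_fst _ _ _
    have eA2 : aK ≫ pullback.snd (Over.mk R.v).hom f =
        pullback.snd ((Over.pullback f ⋙ Over.map f).obj (Over.mk R.v)).hom f := by
      show ((Over.pullback f).map
        ((Over.mapPullbackAdj f).counit.app (Over.mk R.v))).left ≫ _ = _
      exact pullback.lift_snd _ _ _
    have eCD := Over.mapPullbackAdj_counit_app f (Over.mk R.v)
    -- elements
    let y1 := FamHom.toFun Tel w1
    let y2 := FamHom.toFun aK w1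
    let zD : PbIdx R.v f := FamHom.toFun invD
      (FamHom.toFun (pullback.fst
        ((Over.pullback f ⋙ Over.map f).obj (Over.mk R.v)).hom f) w1)
    let j2 : A.idx := FamHom.toFun (pullback.snd
      ((Over.pullback f ⋙ Over.map f).obj (Over.mk R.v)).hom f) w1
    -- fibre identifications
    have d3 : zD.1.2 = FamHom.toFun (pullback.snd (Over.mk R.v).hom f)
        (FamHom.toFun (pullback.fst
          ((Over.pullback f ⋙ Over.map f).obj (Over.mk R.v)).hom f) w1) :=
      famHom_congr (pbIso_inv_snd hm R.v f) _
    have hj12 : FamHom.toFun f zD.1.2 = FamHom.toFun f j2 :=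
      (congrArg (FamHom.toFun f) d3).trans (famHom_congr
        (pullback.condition (f := ((Over.pullback f ⋙ Over.map f).obj (Over.mk R.v)).hom)
          (g := f)) w1)
    have hΞc : FamHom.toFun f j2 =
        FamHom.toFun f (FamHom.toFun M.A.hom (R.psi zD.1.1 zD.1.2 zD.2)) :=
      hj12.symm.trans (congrArg (FamHom.toFun f) (R.hpsi_u zD.1.1 zD.1.2 zD.2)).symm
    have h'' : FamHom.toFun R.v zD.1.1 = FamHom.toFun f j2 := zD.2.trans hj12
    -- components of the transported element on the L.H.S.
    have c1 : (FamHom.toFun (pbIso hm ((Over.map f).obj M.A).hom f).inv y1).1.1 =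
        FamHom.toFun Ψ zD := by
      have t1 := famHom_congr (pbIso_inv_fst hm ((Over.map f).obj M.A).hom f) y1
      have t2 := famHom_congr eT1 w1
      exact t1.trans t2
    have c2 : (FamHom.toFun (pbIso hm ((Over.map f).obj M.A).hom f).inv y1).1.2 = j2 := by
      have t1 := famHom_congr (pbIso_inv_snd hm ((Over.map f).obj M.A).hom f) y1
      have t2 := famHom_congr eT2 w1
      exact t1.trans t2
    -- components of the element on the R.H.S.
    have d1 : (FamHom.toFun invD y2).1.1 = zD.1.1 := by
      have t1 := famHom_congr (pbIso_inv_fst hm R.v f) y2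
      have t2 := famHom_congr eA1 w1
      have t3 := famHom_congr (congrArg CommaMorphism.left eCD)
        (FamHom.toFun (pullback.fst
          ((Over.pullback f ⋙ Over.map f).obj (Over.mk R.v)).hom f) w1)
      have t4 := (famHom_congr (pbIso_inv_fst hm R.v f)
        (FamHom.toFun (pullback.fst
          ((Over.pullback f ⋙ Over.map f).obj (Over.mk R.v)).hom f) w1)).symm
      exact t1.trans (t2.trans (t3.trans t4))
    have d2 : (FamHom.toFun invD y2).1.2 = j2 := by
      have t1 := famHom_congr (pbIso_inv_snd hm R.v f) y2
      have t2 := famHom_congr eA2 w1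
      exact t1.trans t2
    -- assemble
    have pf' : FamHom.toFun ((Over.map f).obj M.A).hom (FamHom.toFun Ψ zD) =
        FamHom.toFun f j2 :=
      (hYt _).trans ((congrArg (FamHom.toFun f) (R.hpsi_u zD.1.1 zD.1.2 zD.2)).trans hj12)
    calc FamHom.toFun M.a.left y1
        = FamHom.toFun θ (FamHom.toFun (pbIso hm ((Over.map f).obj M.A).hom f).inv y1) :=
          (congrArg (FamHom.toFun M.a.left) (hinvhom y1)).symm
      _ = FamHom.toFun θ ⟨(FamHom.toFun Ψ zD, j2), pf'⟩ :=
          congrArg (FamHom.toFun θ) (Subtype.ext (Prod.ext c1 c2))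
      _ = Ξ (R.psi zD.1.1 zD.1.2 zD.2) j2 :=
          (hΞdef (R.psi zD.1.1 zD.1.2 zD.2) j2 hΞc).symm
      _ = R.psi zD.1.1 j2 h'' := R.hXipsi zD.1.1 zD.1.2 zD.2 j2 h''
      _ = FamHom.toFun Ψ ⟨(zD.1.1, j2), h''⟩ := rfl
      _ = FamHom.toFun Ψ (FamHom.toFun invD y2) := by
          have dpair : FamHom.toFun invD y2 = (⟨(zD.1.1, j2), h''⟩ : PbIdx R.v f) :=
            Subtype.ext (Prod.ext d1 d2)
          exact (congrArg (FamHom.toFun Ψ) dpair).symm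

end DescentB

end Statement8Aux
/-- **Lemma (Prezado).** For `X` locally complete, a morphism `f : (α_j) ⟶ (β_k)` in
`Fam(X)` is an effective descent morphism iff it is a descent morphism and every descent
datum `(σ_j) ≤ (α_j)` (i.e. `σ_j ∧ α_i ≅ α_j ∧ σ_i` for `i, j` in the same fibre) satisfies
`α_j ∧ ⋁_{i ∈ f⁻¹(k)} σ_i ≅ σ_j`, joins and meets computed in the relevant down-sets. -/
theorem statement8 {X : Type u} [Preorder X] (hX : LocallyComplete X)
    {A B : FamCat X} (f : A ⟶ B) :
    @IsEffectiveDescentMorphism (FamCat X) _ (FamCat.hasPullbacks hX.meets) _ _ f ↔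
      (@IsDescentMorphism (FamCat X) _ (FamCat.hasPullbacks hX.meets) _ _ f ∧
        ∀ σ : A.idx → X, (∀ j, σ j ≤ A.val j) →
          (∀ i j : A.idx, FamCat.app f i = FamCat.app f j →
            ∀ m m' : X, IsMeet (σ j) (A.val i) m → IsMeet (A.val j) (σ i) m' →
              EquivLE m m') →
          ∀ j : A.idx, ∀ s : X,
            IsLocalJoin (B.val (FamCat.app f j))
              {x | ∃ i : A.idx, FamCat.app f i = FamCat.app f j ∧ x = σ i} s →
            ∀ m : X, IsMeet (A.val j) s m → EquivLE m (σ j)) := by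
  classical
  letI : HasPullbacks (FamCat X) := FamCat.hasPullbacks hX.meets
  constructor
  · intro hEDM
    have hEq : (Monad.comparison (Over.mapPullbackAdj f)).IsEquivalence := hEDM
    refine ⟨⟨hEq.full, hEq.faithful⟩, ?_⟩
    intro σ hle hcompat j s hs m hmt
    exact cond_of_essSurj f σ hEq.essSurj hX.meets hle hcompat j s hs m hmt
  · rintro ⟨hDM, hcond⟩
    have hE : (Monad.comparison (Over.mapPullbackAdj f)).EssSurj := essSurj_of_cond hX f hcond
    exact { full := hDM.1, faithful := hDM.2, essSurj := hE }

end Desc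
end

section
/- Let X be a locally complete ordered set. Then every connected component of X (an equivalence class of the equivalence relation generated by ≤, i.e., generated by zigzags x = x₀ ≤ x₁ ≥ x₂ ≤ … ≤ xₙ = x') is a locally complete ordered set with a bottom element. Moreover, if X is locally cartesian closed, then so is each connected component of X. -/
open CategoryTheory Limits

universe u
universe u₁ v₁ u₂ v₂

attribute [local instance] CategoryTheory.ConcreteCategory.instFunLike

namespace Desc

variable (X : Type u) [Preorder X]

variable {X}

variable {X : Type u} [Preorder X]

variable (X : Type u) [Preorder X]

/-- **Lemma (Janelidze).** If `X` is a locally complete ordered set, then each connected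
component of `X` (w.r.t. the equivalence relation generated by `≤`) is a locally complete
ordered set with a bottom element; moreover it is locally cartesian closed whenever `X` is. -/
theorem statement16 {X : Type u} [Preorder X] (hX : LocallyComplete X) (x : X) :
    LocallyComplete {y : X // Relation.EqvGen (fun a b : X => a ≤ b) x y} ∧
      (∃ b : {y : X // Relation.EqvGen (fun a b : X => a ≤ b) x y}, ∀ z, b ≤ z) ∧
      (LocallyCartesianClosed X →
        LocallyCartesianClosed {y : X // Relation.EqvGen (fun a b : X => a ≤ b) x y}) := by
  classical
  have hbot : ∀ y : X, ∃ b, b ≤ y ∧ ∀ u, u ≤ y → b ≤ u := by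
    intro y
    obtain ⟨j, hj⟩ := hX y (∅ : Set X) (by simp)
    exact ⟨j, hj.1, fun u hu => hj.2.2 u hu (by simp)⟩
  choose bot hbot1 hbot2 using hbot
  have heqv : ∀ y z : X, y ≤ z → bot y ≤ bot z ∧ bot z ≤ bot y := by
    intro y z h
    exact ⟨hbot2 y (bot z) (hbot2 z y h), hbot2 z (bot y) ((hbot1 y).trans h)⟩
  have hkey : ∀ a b : X, Relation.EqvGen (fun a b : X => a ≤ b) a b →
      bot a ≤ bot b ∧ bot b ≤ bot a := by
    intro a b h
    induction h with
    | rel a b h => exact heqv a b h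
    | refl a => exact ⟨le_refl _, le_refl _⟩
    | symm a b _ ih => exact ⟨ih.2, ih.1⟩
    | trans a b c _ _ ih1 ih2 => exact ⟨ih1.1.trans ih2.1, ih2.2.trans ih1.2⟩
  have hmem : ∀ (w : {y : X // Relation.EqvGen (fun a b : X => a ≤ b) x y}) (e : X),
      e ≤ w.val → Relation.EqvGen (fun a b : X => a ≤ b) x e := fun w e h =>
    Relation.EqvGen.trans _ _ _ w.2 (Relation.EqvGen.symm _ _ (Relation.EqvGen.rel e w.val h))
  refine ⟨?_, ?_, ?_⟩
  · intro x₀ S hS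
    obtain ⟨j, hj1, hj2, hj3⟩ := hX x₀.val (Subtype.val '' S)
      (by rintro s ⟨t, ht, rfl⟩; exact hS t ht)
    refine ⟨⟨j, hmem x₀ j hj1⟩, hj1, fun s hs => hj2 s.val ⟨s, hs, rfl⟩,
      fun u hu hub => hj3 u.val hu ?_⟩
    rintro s ⟨t, ht, rfl⟩
    exact hub t ht
  · refine ⟨⟨bot x, Relation.EqvGen.symm _ _ (Relation.EqvGen.rel _ _ (hbot1 x))⟩, ?_⟩
    intro z
    exact (hkey x z.val z.2).1.trans (hbot1 z.val)
  · intro hlcc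
    constructor
    · intro a y z hy hz
      obtain ⟨m, hm1, hm2, hm3⟩ := hlcc.1 a.val y.val z.val hy hz
      exact ⟨⟨m, hmem y m hm1⟩, hm1, hm2, fun u h1 h2 => hm3 u.val h1 h2⟩
    · intro a y z hy hz
      obtain ⟨e, he1, he2⟩ := hlcc.2 a.val y.val z.val hy hz
      refine ⟨⟨e, hmem a e he1⟩, he1, fun w hw => ?_⟩
      constructor
      · rintro ⟨m, hm, hmz⟩
        obtain ⟨m', h1, h2, h3⟩ := hlcc.1 a.val w.val y.val hw hy
        exact (he2 w.val hw).mp ⟨m', ⟨h1, h2, h3⟩,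
          le_trans (hm.2.2 ⟨m', hmem w m' h1⟩ h1 h2) hmz⟩
      · intro hwe
        obtain ⟨m, hm, hmz⟩ := (he2 w.val hw).mpr hwe
        exact ⟨⟨m, hmem w m hm.1⟩, ⟨hm.1, hm.2.1, fun u h1 h2 => hm.2.2 u.val h1 h2⟩, hmz⟩

end Desc
end
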